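/- arXiv:2605.14010 — 8 statements merged into one kernel-verified Lean document; each statement's English description precedes it below -/
import Mathlib

section
/- Let (c₁,…,c_{2m}) be a tuple of natural numbers. Then sgn(c₁,…,c_{2m}) = Σ_{π ∈ Π_{2m}} sgn(π(1),…,π(2m)) · ∏_{l=1}^{m} sgn(c_{π(2l-1)}, c_{π(2l)}), where Π_{2m} is the set of permutations π of {1,…,2m} satisfying π(1) < π(3) < ⋯ < π(2m-1) and π(2l-1) < π(2l) for all 1 ≤ l ≤ m. -/
open Matrix Finset

/-- `sgn2 i j` is the sign of the pair `(i, j)`: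
`0` if `i = j`, `1` if `i < j`, `-1` if `i > j`. -/
def sgn2 (i j : ℕ) : ℤ := if i = j then 0 else if i < j then 1 else -1

/-- The sign of a tuple `(c 0, …, c (n-1))` of natural numbers: `0` if two entries
coincide, otherwise `(-1)` to the number of inversions. -/
def sgnTuple {n : ℕ} (c : Fin n → ℕ) : ℤ :=
  if Function.Injective c then
    (-1) ^ (Finset.univ.filter
      (fun p : Fin n × Fin n => p.1 < p.2 ∧ c p.2 < c p.1)).card
  else 0

/-- The matrix `D⁽ⁿ⁾` with `(i,j)` entry `(-1)^{i+j} ⬝ sgn(i,j)` (`1`-based indices). -/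
def Dmat (F : Type*) [Field F] (n : ℕ) : Matrix (Fin n) (Fin n) F :=
  Matrix.of fun i j =>
    (-1 : F) ^ (((i : ℕ) + 1) + ((j : ℕ) + 1)) * ((sgn2 ((i : ℕ) + 1) ((j : ℕ) + 1) : ℤ) : F)

/-- The permutations `π ∈ Π_{2m}`: (1-based) `π(1) < π(3) < ⋯ < π(2m-1)` and
`π(2l-1) < π(2l)` for all `1 ≤ l ≤ m`. -/
def IsPfPerm {m : ℕ} (π : Equiv.Perm (Fin (2 * m))) : Prop :=
  (∀ l : Fin m, π ⟨2 * l.val, by omega⟩ < π ⟨2 * l.val + 1, by omega⟩) ∧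
  (∀ l l' : Fin m, l < l' → π ⟨2 * l.val, by omega⟩ < π ⟨2 * l'.val, by omega⟩)

instance {m : ℕ} : DecidablePred (@IsPfPerm m) := fun π => by
  unfold IsPfPerm; infer_instance

/-- The Pfaffian of a `2m × 2m` matrix, defined as
`∑_{π ∈ Π_{2m}} sgn(π) ∏_{l=1}^{m} a_{π(2l-1) π(2l)}`. -/
def pfaffian {F : Type*} [Field F] (m : ℕ) (A : Matrix (Fin (2 * m)) (Fin (2 * m)) F) : F :=
  ∑ π ∈ Finset.univ.filter (fun π : Equiv.Perm (Fin (2 * m)) => IsPfPerm π),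
    ((Equiv.Perm.sign π : ℤ) : F) *
      ∏ l : Fin m, A (π ⟨2 * l.val, by omega⟩) (π ⟨2 * l.val + 1, by omega⟩)

/-- The Cullis determinant of an `n × k` matrix (`n ≥ k`):
`(-1)^{1+⋯+k} ∑_{1 ≤ c₁ < ⋯ < c_k ≤ n} (-1)^{c₁+⋯+c_k} det X[c₁,…,c_k | 1,…,k]`. -/
def cullisDet {F : Type*} [Field F] (n k : ℕ) (X : Matrix (Fin n) (Fin k) F) : F :=
  (-1 : F) ^ (∑ j ∈ Finset.range k, (j + 1)) *
    ∑ c ∈ Finset.univ.filter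
        (fun c : Fin k → Fin n => ∀ i j : Fin k, i < j → c i < c j),
      (-1 : F) ^ (∑ i : Fin k, ((c i : ℕ) + 1)) * (X.submatrix c id).det

/-- The matrix `SGN(c₁,…,c_n)` with `(i,j)` entry `sgn(c_i, c_j)`, over a field. -/
def SGNmat (F : Type*) [Field F] {n : ℕ} (c : Fin n → ℕ) : Matrix (Fin n) (Fin n) F :=
  Matrix.of fun i j => ((sgn2 (c i) (c j) : ℤ) : F)

/-- The permutation matrix `P^π` with `(i,j)` entry `1` if `j = π i` and `0` otherwise. -/
def Pmat (F : Type*) [Field F] {n : ℕ} (π : Equiv.Perm (Fin n)) : Matrix (Fin n) (Fin n) F :=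
  Matrix.of fun i j => if j = π i then (1 : F) else 0

/-- The increasing enumeration of the complement of `{i, j}` in `Fin N`
(used to delete rows/columns `i` and `j`). -/
def delTwo {N M : ℕ} (i j : Fin N) : Fin M → Fin N :=
  fun l => (Finset.sort ({i, j}ᶜ : Finset (Fin N)) (· ≤ ·)).getD (l : ℕ) i

/-- The increasing enumeration of the complement of `{i}` in `Fin N`
(used to delete row/column `i`). -/
def delOne {N M : ℕ} (i : Fin N) : Fin M → Fin N :=
  fun l => (Finset.sort ({i}ᶜ : Finset (Fin N)) (· ≤ ·)).getD (l : ℕ) i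

/-- Append a final column of `1`'s to a matrix (the matrix `X'`). -/
def appendOnes {F : Type*} [Field F] {n k K : ℕ} (X : Matrix (Fin n) (Fin k) F) :
    Matrix (Fin n) (Fin K) F :=
  Matrix.of fun i j => if h : (j : ℕ) < k then X i ⟨(j : ℕ), h⟩ else 1

/-- Append a final row of `0`'s and then a final column of `1`'s (the matrix `X''`). -/
def appendZerosOnes {F : Type*} [Field F] {n k N K : ℕ} (X : Matrix (Fin n) (Fin k) F) :
    Matrix (Fin N) (Fin K) F :=
  Matrix.of fun i j =>
    if hj : (j : ℕ) < k then
      (if hi : (i : ℕ) < n then X ⟨(i : ℕ), hi⟩ ⟨(j : ℕ), hj⟩ else 0)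
    else 1

namespace SgnPf
open Equiv Equiv.Perm

lemma sgn2_of_lt {i j : ℕ} (h : i < j) : sgn2 i j = 1 := by
  unfold sgn2; rw [if_neg (by omega), if_pos h]

lemma sgn2_of_gt {i j : ℕ} (h : j < i) : sgn2 i j = -1 := by
  unfold sgn2; rw [if_neg (by omega), if_neg (by omega)]

lemma sgn2_of_eq {i j : ℕ} (h : i = j) : sgn2 i j = 0 := by
  unfold sgn2; rw [if_pos h]

lemma sgn2_swap (i j : ℕ) : sgn2 j i = - sgn2 i j := by
  rcases lt_trichotomy i j with h | h | h
  · rw [sgn2_of_lt h, sgn2_of_gt h]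
  · rw [sgn2_of_eq h, sgn2_of_eq h.symm]; ring
  · rw [sgn2_of_gt h, sgn2_of_lt h]; ring

/-- the set of increasing pairs -/
def ltPairs (n : ℕ) : Finset (Fin n × Fin n) :=
  Finset.univ.filter fun p => p.1 < p.2

lemma sgnTuple_eq_prod {n : ℕ} (c : Fin n → ℕ) :
    sgnTuple c = ∏ p ∈ ltPairs n, sgn2 (c p.1) (c p.2) := by
  by_cases hc : Function.Injective c
  · rw [sgnTuple, if_pos hc]
    have h1 : ∀ p ∈ ltPairs n, sgn2 (c p.1) (c p.2)
        = if c p.2 < c p.1 then (-1 : ℤ) else 1 := by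
      intro p hp
      rw [ltPairs, Finset.mem_filter] at hp
      have hne : c p.1 ≠ c p.2 := fun h => absurd (hc h) (ne_of_lt hp.2)
      rcases lt_or_gt_of_ne hne with h | h
      · rw [sgn2_of_lt h, if_neg (by omega)]
      · rw [sgn2_of_gt h, if_pos h]
    rw [Finset.prod_congr rfl h1, Finset.prod_ite, Finset.prod_const, Finset.prod_const,
      one_pow, mul_one]
    congr 1
    rw [ltPairs, Finset.filter_filter]
  · rw [sgnTuple, if_neg hc]
    rw [Function.not_injective_iff] at hc
    obtain ⟨i, j, hij, hne⟩ := hc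
    rcases Ne.lt_or_gt hne with h | h
    · exact (Finset.prod_eq_zero (i := (i, j))
        (by simp [ltPairs, h]) (sgn2_of_eq hij)).symm
    · exact (Finset.prod_eq_zero (i := (j, i))
        (by simp [ltPairs, h]) (sgn2_of_eq hij.symm)).symm

lemma sign_eq_signAux {n : ℕ} (f : Perm (Fin n)) : Perm.sign f = signAux f := by
  refine Perm.swap_induction_on f ?_ ?_
  · simp [signAux_one]
  · intro f x y hxy ih
    rw [Perm.sign_mul, Perm.sign_swap hxy, signAux_mul, signAux_swap hxy, ih]

lemma sgnTuple_perm {n : ℕ} (π : Perm (Fin n)) :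
    sgnTuple (fun i => ((π i : ℕ))) = Perm.sign π := by
  have hinj : Function.Injective (fun i => ((π i : ℕ))) := by
    intro a b h
    exact π.injective (Fin.val_injective h)
  rw [sgnTuple, if_pos hinj, sign_eq_signAux]
  rw [signAux]
  have h1 : ∀ x ∈ finPairsLT n, (if π x.1 ≤ π x.2 then (-1 : ℤˣ) else 1)
      = if π x.1 ≤ π x.2 then (-1 : ℤˣ) else 1 := fun _ _ => rfl
  rw [Finset.prod_ite, Finset.prod_const, Finset.prod_const, one_pow, mul_one]
  have hcard : (Finset.univ.filter
      (fun p : Fin n × Fin n => p.1 < p.2 ∧ (π p.2 : ℕ) < (π p.1 : ℕ))).card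
      = ((finPairsLT n).filter (fun x => π x.1 ≤ π x.2)).card := by
    refine Finset.card_bij (fun p _ => ⟨p.2, p.1⟩) ?_ ?_ ?_
    · intro p hp
      simp only [Finset.mem_filter, Finset.mem_univ, true_and] at hp
      simp only [Finset.mem_filter, mem_finPairsLT]
      exact ⟨hp.1, le_of_lt hp.2⟩
    · intro p hp q hq h
      simp only [Sigma.mk.inj_iff, heq_eq_eq] at h
      exact Prod.ext h.2 h.1
    · intro x hx
      simp only [Finset.mem_filter, mem_finPairsLT] at hx
      refine ⟨(x.2, x.1), ?_, rfl⟩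
      simp only [Finset.mem_filter, Finset.mem_univ, true_and]
      refine ⟨hx.1, ?_⟩
      have hne : π x.1 ≠ π x.2 := fun h =>
        absurd (π.injective h) (ne_of_gt hx.1)
      exact Fin.lt_iff_val_lt_val.mp (lt_of_le_of_ne hx.2 hne)
  rw [hcard]
  push_cast
  norm_num
end SgnPf

namespace SgnPf
open Equiv Equiv.Perm Finset

variable {m : ℕ}

def p0 (m : ℕ) (l : Fin m) : Fin (2 * m) := ⟨2 * l.val, by omega⟩
def p1 (m : ℕ) (l : Fin m) : Fin (2 * m) := ⟨2 * l.val + 1, by omega⟩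

lemma p0_lt_p1 (l : Fin m) : p0 m l < p1 m l := by
  simp [p0, p1, Fin.lt_def]

/-- `Fin (2*m) ≃ Fin m × Bool`, `2l+b ↦ (l, b)`. -/
def pairEquiv (m : ℕ) : Fin (2 * m) ≃ Fin m × Bool where
  toFun x := (⟨x.val / 2, by omega⟩, decide (x.val % 2 = 1))
  invFun p := if p.2 then p1 m p.1 else p0 m p.1
  left_inv x := by
    by_cases h : x.val % 2 = 1
    · have h2 : decide (x.val % 2 = 1) = true := decide_eq_true h
      simp only [h2, if_true, p1]
      apply Fin.val_injective; simp; omega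
    · have h2 : decide (x.val % 2 = 1) = false := decide_eq_false h
      simp only [h2, Bool.false_eq_true, if_false, p0]
      apply Fin.val_injective; simp; omega
  right_inv p := by
    rcases p with ⟨l, b⟩
    cases b
    · simp only [Bool.false_eq_true, if_false, p0]
      have h1 : 2 * l.val % 2 = 0 := by omega
      have h2 : 2 * l.val / 2 = l.val := by omega
      refine Prod.ext ?_ ?_
      · apply Fin.val_injective; simpa using h2
      · simp [h1]
    · simp only [if_true, p1]
      have h1 : (2 * l.val + 1) % 2 = 1 := by omega
      have h2 : (2 * l.val + 1) / 2 = l.val := by omega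
      refine Prod.ext ?_ ?_
      · apply Fin.val_injective; simpa using h2
      · simp [h1]

@[simp] lemma pairEquiv_p0 (l : Fin m) : pairEquiv m (p0 m l) = (l, false) := by
  simp only [pairEquiv, p0, Equiv.coe_fn_mk]
  have h1 : 2 * l.val % 2 = 0 := by omega
  have h2 : 2 * l.val / 2 = l.val := by omega
  refine Prod.ext ?_ ?_
  · apply Fin.val_injective; simpa using h2
  · simp [h1]

@[simp] lemma pairEquiv_p1 (l : Fin m) : pairEquiv m (p1 m l) = (l, true) := by
  simp only [pairEquiv, p1, Equiv.coe_fn_mk]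
  have h1 : (2 * l.val + 1) % 2 = 1 := by omega
  have h2 : (2 * l.val + 1) / 2 = l.val := by omega
  refine Prod.ext ?_ ?_
  · apply Fin.val_injective; simpa using h2
  · simp [h1]

@[simp] lemma pairEquiv_symm_false (l : Fin m) :
    (pairEquiv m).symm (l, false) = p0 m l := by
  rw [Equiv.symm_apply_eq, pairEquiv_p0]

@[simp] lemma pairEquiv_symm_true (l : Fin m) :
    (pairEquiv m).symm (l, true) = p1 m l := by
  rw [Equiv.symm_apply_eq, pairEquiv_p1]

def flipB : Perm Bool := Equiv.swap false true

@[simp] lemma flipB_apply (b : Bool) : flipB b = !b := by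
  cases b <;> simp [flipB]

/-- permutation of `Fin m × Bool` given by `(l, b) ↦ (τ l, b XOR ε (τ l))`. -/
def hp (τ : Perm (Fin m)) (ε : Fin m → Bool) : Perm (Fin m × Bool) :=
  (Equiv.prodCongrRight (fun l => if ε l then flipB else 1)) *
    (Equiv.prodCongrLeft (fun _ => τ))

lemma hp_apply (τ : Perm (Fin m)) (ε : Fin m → Bool) (l : Fin m) (b : Bool) :
    hp τ ε (l, b) = (τ l, if ε (τ l) then !b else b) := by
  simp only [hp, Perm.mul_apply, Equiv.prodCongrLeft_apply, Equiv.prodCongrRight_apply]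
  by_cases h : ε (τ l) <;> simp [h]

/-- the pair-block permutation of `Fin (2*m)`. -/
def hperm (τ : Perm (Fin m)) (ε : Fin m → Bool) : Perm (Fin (2 * m)) :=
  ((pairEquiv m).symm.permCongr (hp τ ε))

lemma hperm_p0 (τ : Perm (Fin m)) (ε : Fin m → Bool) (l : Fin m) :
    hperm τ ε (p0 m l) = if ε (τ l) then p1 m (τ l) else p0 m (τ l) := by
  simp only [hperm, Equiv.permCongr_apply, Equiv.symm_symm, pairEquiv_p0, hp_apply]
  by_cases h : ε (τ l) <;> simp [h]

lemma hperm_p1 (τ : Perm (Fin m)) (ε : Fin m → Bool) (l : Fin m) :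
    hperm τ ε (p1 m l) = if ε (τ l) then p0 m (τ l) else p1 m (τ l) := by
  simp only [hperm, Equiv.permCongr_apply, Equiv.symm_symm, pairEquiv_p1, hp_apply]
  by_cases h : ε (τ l) <;> simp [h]

lemma hperm_mul_cancel (τ : Perm (Fin m)) (ε : Fin m → Bool) :
    hperm τ ε * hperm τ⁻¹ (ε ∘ τ) = 1 := by
  ext x
  have : ∀ p : Fin m × Bool, hp τ ε (hp τ⁻¹ (ε ∘ τ) p) = p := by
    rintro ⟨l, b⟩
    rw [hp_apply, hp_apply]
    simp only [Function.comp_apply, Perm.coe_inv, Equiv.apply_symm_apply]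
    by_cases h : ε l <;> simp [h]
  simp only [hperm, Perm.mul_apply, Equiv.permCongr_apply, Equiv.symm_symm,
    Equiv.symm_apply_apply, Perm.one_apply]
  rw [Equiv.apply_symm_apply, this, Equiv.symm_apply_apply]

lemma hperm_inv (τ : Perm (Fin m)) (ε : Fin m → Bool) :
    (hperm τ ε)⁻¹ = hperm τ⁻¹ (ε ∘ τ) :=
  inv_eq_of_mul_eq_one_right (hperm_mul_cancel τ ε)

lemma sign_hperm (τ : Perm (Fin m)) (ε : Fin m → Bool) :
    Perm.sign (hperm τ ε) = ∏ l : Fin m, (if ε l then (-1 : ℤˣ) else 1) := by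
  rw [hperm, Perm.sign_permCongr, hp, Perm.sign_mul, Perm.sign_prodCongrRight,
    Perm.sign_prodCongrLeft]
  have h1 : ∀ l : Fin m, Perm.sign (if ε l then flipB else 1)
      = (if ε l then (-1 : ℤˣ) else 1) := by
    intro l
    by_cases h : ε l <;> simp [h, flipB, Perm.sign_swap]
  rw [Finset.prod_congr rfl (fun l _ => h1 l)]
  have h2 : ∏ _k : Bool, Perm.sign τ = 1 := by
    rw [Finset.prod_const]
    simp [Int.units_sq]
  rw [h2, mul_one]

lemma hperm_injective :
    Function.Injective (fun p : Perm (Fin m) × (Fin m → Bool) => hperm p.1 p.2) := by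
  rintro ⟨τ, ε⟩ ⟨τ', ε'⟩ h
  simp only at h
  have hτ : τ = τ' := by
    apply Equiv.ext; intro l
    have h0 := congrArg (fun (f : Perm (Fin (2*m))) => (f (p0 m l)).val) h
    simp only [hperm_p0] at h0
    apply Fin.val_injective
    show ((τ l : Fin m) : ℕ) = ((τ' l : Fin m) : ℕ)
    cases h1 : ε (τ l) <;> cases h2 : ε' (τ' l) <;>
      simp [h1, h2, p0, p1] at h0 <;> omega
  subst hτ
  have hε : ε = ε' := by
    funext j
    obtain ⟨l, rfl⟩ := τ.surjective j
    have h0 := congrArg (fun (f : Perm (Fin (2*m))) => (f (p0 m l)).val) h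
    simp only [hperm_p0] at h0
    cases h1 : ε (τ l) <;> cases h2 : ε' (τ l) <;>
      simp [h1, h2, p0, p1] at h0 <;> first | rfl | omega
  rw [hε]

end SgnPf

namespace SgnPf
open Equiv Equiv.Perm Finset

variable {m : ℕ}

lemma isPfPerm_iff (π : Perm (Fin (2 * m))) : IsPfPerm π ↔
    (∀ l : Fin m, π (p0 m l) < π (p1 m l)) ∧
    (∀ l l' : Fin m, l < l' → π (p0 m l) < π (p0 m l')) := Iff.rfl

def PiSet (m : ℕ) : Finset (Perm (Fin (2 * m))) :=
  Finset.univ.filter IsPfPerm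

def term (c : Fin (2 * m) → ℕ) (σ : Perm (Fin (2 * m))) : ℤ :=
  ((Perm.sign σ : ℤˣ) : ℤ) * ∏ l : Fin m, sgn2 (c (σ (p0 m l))) (c (σ (p1 m l)))

lemma term_hperm (c : Fin (2 * m) → ℕ) (σ : Perm (Fin (2 * m)))
    (τ : Perm (Fin m)) (ε : Fin m → Bool) :
    term c (σ * hperm τ ε) = term c σ := by
  unfold term
  rw [Perm.sign_mul, sign_hperm]
  have key : ∀ l : Fin m,
      sgn2 (c ((σ * hperm τ ε) (p0 m l))) (c ((σ * hperm τ ε) (p1 m l)))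
      = (if ε (τ l) then (-1 : ℤ) else 1) *
          sgn2 (c (σ (p0 m (τ l)))) (c (σ (p1 m (τ l)))) := by
    intro l
    simp only [Perm.mul_apply, hperm_p0, hperm_p1]
    cases h : ε (τ l)
    · simp [h]
    · simp only [h, if_true]
      rw [sgn2_swap]
      ring
  rw [Finset.prod_congr rfl (fun l _ => key l), Finset.prod_mul_distrib,
    Equiv.prod_comp τ (fun j => (if ε j then (-1 : ℤ) else 1)),
    Equiv.prod_comp τ (fun j => sgn2 (c (σ (p0 m j))) (c (σ (p1 m j))))]
  have hcast : ((↑(Perm.sign σ * ∏ l : Fin m, (if ε l then (-1 : ℤˣ) else 1)) : ℤˣ) : ℤ)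
      = ((Perm.sign σ : ℤˣ) : ℤ) * ∏ l : Fin m, (if ε l then (-1 : ℤ) else 1) := by
    push_cast
    congr 1
    exact Finset.prod_congr rfl (fun l _ => by cases h : ε l <;> simp [h])
  rw [hcast]
  have hA : (∏ l : Fin m, (if ε l then (-1 : ℤ) else 1)) *
      (∏ l : Fin m, (if ε l then (-1 : ℤ) else 1)) = 1 := by
    rw [← Finset.prod_mul_distrib]
    rw [Finset.prod_congr rfl (fun l _ => by cases h : ε l <;> simp [h] : ∀ l ∈ univ, _ = (1:ℤ))]
    exact Finset.prod_const_one
  calc ((Perm.sign σ : ℤˣ) : ℤ) * (∏ l : Fin m, (if ε l then (-1 : ℤ) else 1)) *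
        ((∏ l : Fin m, (if ε l then (-1 : ℤ) else 1)) *
          ∏ l : Fin m, sgn2 (c (σ (p0 m l))) (c (σ (p1 m l))))
      = ((Perm.sign σ : ℤˣ) : ℤ) *
        ((∏ l : Fin m, (if ε l then (-1 : ℤ) else 1)) *
          (∏ l : Fin m, (if ε l then (-1 : ℤ) else 1))) *
          ∏ l : Fin m, sgn2 (c (σ (p0 m l))) (c (σ (p1 m l))) := by ring
    _ = _ := by rw [hA]; ring

def εof (σ : Perm (Fin (2 * m))) : Fin m → Bool :=
  fun l => decide (σ (p1 m l) < σ (p0 m l))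

def μof (σ : Perm (Fin (2 * m))) : Fin m → Fin (2 * m) :=
  fun l => if εof σ l then σ (p1 m l) else σ (p0 m l)

def νof (σ : Perm (Fin (2 * m))) : Fin m → Fin (2 * m) :=
  fun l => if εof σ l then σ (p0 m l) else σ (p1 m l)

def sof (σ : Perm (Fin (2 * m))) : Perm (Fin m) := Tuple.sort (μof σ)

def canon (σ : Perm (Fin (2 * m))) : Perm (Fin (2 * m)) :=
  σ * hperm (sof σ) (εof σ)

lemma canon_p0 (σ : Perm (Fin (2 * m))) (l : Fin m) :
    canon σ (p0 m l) = μof σ (sof σ l) := by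
  simp only [canon, Perm.mul_apply, hperm_p0, μof]
  cases h : εof σ (sof σ l) <;> simp [h]

lemma canon_p1 (σ : Perm (Fin (2 * m))) (l : Fin m) :
    canon σ (p1 m l) = νof σ (sof σ l) := by
  simp only [canon, Perm.mul_apply, hperm_p1, νof]
  cases h : εof σ (sof σ l) <;> simp [h]

lemma μof_lt_νof (σ : Perm (Fin (2 * m))) (l : Fin m) : μof σ l < νof σ l := by
  unfold μof νof εof
  have hne : σ (p0 m l) ≠ σ (p1 m l) := fun h =>
    absurd (σ.injective h) (ne_of_lt (p0_lt_p1 l))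
  cases hd : decide (σ (p1 m l) < σ (p0 m l))
  · simp only [hd, Bool.false_eq_true, if_false]
    exact lt_of_le_of_ne (not_lt.mp (of_decide_eq_false hd)) hne
  · simp only [hd, if_true]
    exact of_decide_eq_true hd

lemma μof_inj (σ : Perm (Fin (2 * m))) : Function.Injective (μof σ) := by
  intro a b h
  have ha : μof σ a = σ (p0 m a) ∨ μof σ a = σ (p1 m a) := by
    unfold μof; cases h : εof σ a <;> simp [h]
  have hb : μof σ b = σ (p0 m b) ∨ μof σ b = σ (p1 m b) := by
    unfold μof; cases h : εof σ b <;> simp [h]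
  apply Fin.val_injective
  rcases ha with ha | ha <;> rcases hb with hb | hb <;>
    · rw [ha, hb] at h
      have := σ.injective h
      have h2 := congrArg Fin.val this
      simp only [p0, p1] at h2
      omega

lemma canon_mem (σ : Perm (Fin (2 * m))) : IsPfPerm (canon σ) := by
  rw [isPfPerm_iff]
  have hmono : Monotone (μof σ ∘ (sof σ : Perm (Fin m))) := Tuple.monotone_sort (μof σ)
  have hsm : StrictMono (μof σ ∘ (sof σ : Perm (Fin m))) :=
    hmono.strictMono_of_injective ((μof_inj σ).comp (sof σ).injective)
  constructor
  · intro l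
    rw [canon_p0, canon_p1]
    exact μof_lt_νof σ (sof σ l)
  · intro l l' hll'
    rw [canon_p0, canon_p0]
    exact hsm hll'

lemma canon_eq (π : Perm (Fin (2 * m))) (τ : Perm (Fin m)) (ε : Fin m → Bool)
    (hπ : IsPfPerm π) : canon (π * hperm τ ε) = π := by
  rw [isPfPerm_iff] at hπ
  set σ := π * hperm τ ε with hσdef
  have hσ0 : ∀ l, σ (p0 m l) = if ε (τ l) then π (p1 m (τ l)) else π (p0 m (τ l)) := by
    intro l
    simp only [hσdef, Perm.mul_apply, hperm_p0, apply_ite π]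
  have hσ1 : ∀ l, σ (p1 m l) = if ε (τ l) then π (p0 m (τ l)) else π (p1 m (τ l)) := by
    intro l
    simp only [hσdef, Perm.mul_apply, hperm_p1, apply_ite π]
  have hε : εof σ = ε ∘ τ := by
    funext l
    unfold εof
    rw [hσ0, hσ1]
    cases h : ε (τ l) <;> simp only [h, if_true, if_false, Bool.false_eq_true,
      Function.comp_apply]
    · exact decide_eq_false (not_lt.mpr (le_of_lt (hπ.1 (τ l))))
    · exact decide_eq_true (hπ.1 (τ l))
  have hμ : μof σ = fun l => π (p0 m (τ l)) := by
    funext l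
    unfold μof
    rw [hε]
    simp only [Function.comp_apply]
    by_cases h : ε (τ l) = true
    · rw [if_pos h, hσ1, if_pos h]
    · rw [if_neg h, hσ0, if_neg h]
  have hs : sof σ = τ⁻¹ := by
    have h1 : Monotone (μof σ ∘ (sof σ : Perm (Fin m))) := Tuple.monotone_sort (μof σ)
    have h2 : Monotone (μof σ ∘ ((τ⁻¹ : Perm (Fin m)) : Fin m → Fin m)) := by
      rw [hμ]
      intro a b hab
      simp only [Function.comp_apply, Perm.coe_inv, Equiv.apply_symm_apply]
      rcases lt_or_eq_of_le hab with h | h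
      · exact le_of_lt (hπ.2 a b h)
      · rw [h]
    have h3 := Tuple.unique_monotone h1 h2
    apply Equiv.ext
    intro l
    exact μof_inj σ (congrFun h3 l)
  rw [canon, hε, hs, hσdef, mul_assoc, hperm_mul_cancel τ ε, mul_one]

lemma canon_fiber (π : Perm (Fin (2 * m))) (hπ : IsPfPerm π) :
    Finset.univ.filter (fun σ => canon σ = π)
      = Finset.image (fun p : Perm (Fin m) × (Fin m → Bool) => π * hperm p.1 p.2)
          Finset.univ := by
  apply Finset.ext
  intro σ
  simp only [Finset.mem_filter, Finset.mem_univ, true_and, Finset.mem_image,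
    Prod.exists]
  constructor
  · intro hc
    refine ⟨(sof σ)⁻¹, εof σ ∘ (sof σ), ?_⟩
    rw [← hperm_inv, ← hc, canon, mul_assoc]
    simp
  · rintro ⟨τ, ε, rfl⟩
    exact canon_eq π τ ε hπ

lemma master (c : Fin (2 * m) → ℕ) :
    (∑ σ : Perm (Fin (2 * m)), term c σ)
      = (2 ^ m * Nat.factorial m : ℤ) * ∑ π ∈ PiSet m, term c π := by
  rw [← Finset.sum_fiberwise_of_maps_to
    (g := canon) (t := PiSet m)
    (fun σ _ => by simp [PiSet, canon_mem σ]) (term c)]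
  rw [Finset.mul_sum]
  apply Finset.sum_congr rfl
  intro π hπ
  have hπ' : IsPfPerm π := by simpa [PiSet] using hπ
  rw [canon_fiber π hπ']
  rw [Finset.sum_image (fun p _ q _ h => hperm_injective (mul_left_cancel h))]
  have hterm : ∀ p : Perm (Fin m) × (Fin m → Bool),
      term c (π * hperm p.1 p.2) = term c π := fun p => term_hperm c π p.1 p.2
  rw [Finset.sum_congr rfl (fun p _ => hterm p), Finset.sum_const]
  have hcard : (Finset.univ : Finset (Perm (Fin m) × (Fin m → Bool))).card
      = Nat.factorial m * 2 ^ m := by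
    simp [Fintype.card_perm, Fintype.card_fun]
  rw [hcard]
  push_cast
  ring

end SgnPf
namespace SgnPf
open Equiv Equiv.Perm Finset

variable {m : ℕ}

@[simp] lemma p0_val (l : Fin m) : (p0 m l).val = 2 * l.val := rfl
@[simp] lemma p1_val (l : Fin m) : (p1 m l).val = 2 * l.val + 1 := rfl

lemma eq_p0_or_p1 (x : Fin (2 * m)) (l : Fin m) (hl : l.val = x.val / 2) :
    x = p0 m l ∨ x = p1 m l := by
  rcases Nat.even_or_odd x.val with h | h
  · left; apply Fin.val_injective; obtain ⟨k, hk⟩ := h; simp [p0, hl]; omega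
  · right; apply Fin.val_injective; obtain ⟨k, hk⟩ := h; simp [p1, hl]; omega

def Fset (π : Perm (Fin (2 * m))) : Finset (Fin m) :=
  Finset.univ.filter (fun l => π (p0 m l) ≠ p0 m l ∨ π (p1 m l) ≠ p1 m l)

lemma not_mem_Fset_iff (π : Perm (Fin (2 * m))) (l : Fin m) :
    l ∉ Fset π ↔ (π (p0 m l) = p0 m l ∧ π (p1 m l) = p1 m l) := by
  simp only [Fset, Finset.mem_filter, Finset.mem_univ, true_and, not_or, not_not]

lemma Fset_nonempty (π : Perm (Fin (2 * m))) (h : π ≠ 1) : (Fset π).Nonempty := by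
  rw [Finset.nonempty_iff_ne_empty]
  intro he
  apply h
  apply Equiv.ext; intro x
  have hx : x.val < 2 * m := x.isLt
  have hmem : (⟨x.val / 2, by omega⟩ : Fin m) ∉ Fset π := by
    rw [he]; exact Finset.notMem_empty _
  rw [not_mem_Fset_iff] at hmem
  rcases eq_p0_or_p1 x ⟨x.val / 2, by omega⟩ rfl with hp | hp
  · rw [hp, hmem.1]; rfl
  · rw [hp, hmem.2]; rfl

def tmin (π : Perm (Fin (2 * m))) (h : (Fset π).Nonempty) : Fin m := (Fset π).min' h

lemma tmin_fix (π : Perm (Fin (2 * m))) (h : (Fset π).Nonempty) (x : Fin (2 * m))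
    (hx : x.val < 2 * (tmin π h).val) : π x = x := by
  have hlt : (⟨x.val / 2, by omega⟩ : Fin m) < tmin π h := by
    rw [Fin.lt_def]; simp; omega
  have hnm : (⟨x.val / 2, by omega⟩ : Fin m) ∉ Fset π := fun hm =>
    absurd (Finset.min'_le _ _ hm) (not_le.mpr hlt)
  rw [not_mem_Fset_iff] at hnm
  rcases eq_p0_or_p1 x ⟨x.val / 2, by omega⟩ rfl with hp | hp
  · rw [hp]; exact hnm.1
  · rw [hp]; exact hnm.2

lemma tmin_ge (π : Perm (Fin (2 * m))) (h : (Fset π).Nonempty) (x : Fin (2 * m))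
    (hx : 2 * (tmin π h).val ≤ x.val) : 2 * (tmin π h).val ≤ (π x).val := by
  by_contra hc
  push_neg at hc
  have h1 := tmin_fix π h (π x) hc
  have h2 : π x = x := π.injective h1
  rw [h2] at hc
  exact absurd hc (not_lt.mpr hx)

lemma tmin_p0 (π : Perm (Fin (2 * m))) (h : (Fset π).Nonempty) (hπ : IsPfPerm π) :
    π (p0 m (tmin π h)) = p0 m (tmin π h) := by
  rw [isPfPerm_iff] at hπ
  set t := tmin π h with htdef
  by_contra hne
  set y := π⁻¹ (p0 m t) with hydef
  have hyx : π y = p0 m t := by rw [hydef]; simp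
  have hy1 : 2 * t.val ≤ y.val := by
    by_contra hc
    push_neg at hc
    have h1 := tmin_fix π h y hc
    rw [h1] at hyx
    have := congrArg Fin.val hyx
    simp at this
    omega
  have hy2 : y ≠ p0 m t := fun he => hne (he ▸ hyx)
  have hy3 : 2 * t.val + 1 ≤ y.val := by
    have : y.val ≠ (p0 m t).val := fun hv => hy2 (Fin.val_injective hv)
    simp at this
    omega
  set l' : Fin m := ⟨y.val / 2, by omega⟩ with hl'def
  rcases eq_p0_or_p1 y l' rfl with hy | hy
  · have hvy : y.val = 2 * l'.val := by rw [hy]; simp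
    have htl : t < l' := by rw [Fin.lt_def]; omega
    have hlt := hπ.2 t l' htl
    rw [← hy, hyx] at hlt
    have hge := tmin_ge π h (p0 m t) (by rw [← htdef]; simp)
    rw [← htdef] at hge
    rw [Fin.lt_def] at hlt
    simp at hlt
    omega
  · have hvy : y.val = 2 * l'.val + 1 := by rw [hy]; simp
    have h4 := hπ.1 l'
    rw [← hy, hyx] at h4
    have hge := tmin_ge π h (p0 m l') (by rw [← htdef]; simp; omega)
    rw [← htdef] at hge
    rw [Fin.lt_def] at h4
    simp at h4
    omega

lemma tmin_p1 (π : Perm (Fin (2 * m))) (h : (Fset π).Nonempty) (hπ : IsPfPerm π) :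
    2 * (tmin π h).val + 2 ≤ (π (p1 m (tmin π h))).val := by
  set t := tmin π h with htdef
  have hge : 2 * t.val ≤ (π (p1 m t)).val := tmin_ge π h _ (by rw [← htdef]; simp only [p1_val]; omega)
  have hne0 : π (p1 m t) ≠ p0 m t := by
    intro he
    have h1 := tmin_p0 π h hπ
    have h2 := π.injective (he.trans h1.symm)
    have := congrArg Fin.val h2
    simp at this
    rw [← htdef] at this; omega
  have hne1 : π (p1 m t) ≠ p1 m t := by
    intro he
    have hmem : t ∈ Fset π := Finset.min'_mem (Fset π) h
    rw [Fset, Finset.mem_filter] at hmem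
    rcases hmem.2 with h1 | h1
    · exact h1 (tmin_p0 π h hπ)
    · exact h1 he
  have v0 : (π (p1 m t)).val ≠ 2 * t.val := fun hv =>
    hne0 (Fin.val_injective (by simpa using hv))
  have v1 : (π (p1 m t)).val ≠ 2 * t.val + 1 := fun hv =>
    hne1 (Fin.val_injective (by simpa using hv))
  omega

lemma tmin_partner (π : Perm (Fin (2 * m))) (h : (Fset π).Nonempty) (hπ : IsPfPerm π) :
    ∃ l' : Fin m, tmin π h < l' ∧ π (p0 m l') = p1 m (tmin π h) := by
  have hπ' := hπ
  rw [isPfPerm_iff] at hπ'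
  set t := tmin π h with htdef
  set y := π⁻¹ (p1 m t) with hydef
  have hyx : π y = p1 m t := by rw [hydef]; simp
  have hy1 : 2 * t.val ≤ y.val := by
    by_contra hc
    push_neg at hc
    have h1 := tmin_fix π h y hc
    rw [h1] at hyx
    have := congrArg Fin.val hyx
    simp at this
    omega
  have hy2 : y ≠ p0 m t := by
    intro he
    rw [he, tmin_p0 π h hπ] at hyx
    have := congrArg Fin.val hyx
    simp at this
    rw [← htdef] at this; omega
  have hy3 : y ≠ p1 m t := by
    intro he
    rw [he] at hyx
    have := tmin_p1 π h hπ
    rw [hyx] at this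
    simp at this
    rw [← htdef] at this; exact lt_irrefl _ this
  have hyv2 : y.val ≠ 2 * t.val := fun hv => hy2 (Fin.val_injective (by simpa using hv))
  have hyv3 : y.val ≠ 2 * t.val + 1 := fun hv => hy3 (Fin.val_injective (by simpa using hv))
  have hy4 : 2 * t.val + 2 ≤ y.val := by omega
  set l' : Fin m := ⟨y.val / 2, by omega⟩ with hl'def
  rcases eq_p0_or_p1 y l' rfl with hy | hy
  · refine ⟨l', ?_, ?_⟩
    · rw [Fin.lt_def]
      have hvy : y.val = 2 * l'.val := by rw [hy]; simp
      omega
    · rw [← hy]; exact hyx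
  · exfalso
    have hvy : y.val = 2 * l'.val + 1 := by rw [hy]; simp
    have h4 := hπ'.1 l'
    rw [← hy, hyx] at h4
    have hge := tmin_ge π h (p0 m l') (by rw [← htdef]; simp; omega)
    rw [← htdef] at hge
    rw [Fin.lt_def] at h4
    simp at h4
    have heq : π (p0 m l') = p0 m t := by
      apply Fin.val_injective
      simp
      omega
    rw [← tmin_p0 π h hπ] at heq
    have := π.injective heq
    have := congrArg Fin.val this
    simp at this
    omega

def Tmap (π : Perm (Fin (2 * m))) (h : (Fset π).Nonempty) : Perm (Fin (2 * m)) :=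
  π * Equiv.swap (p1 m (tmin π h))
    (p1 m ⟨(π⁻¹ (p1 m (tmin π h))).val / 2, by omega⟩)

lemma Tmap_eq (π : Perm (Fin (2 * m))) (h : (Fset π).Nonempty) (hπ : IsPfPerm π) :
    ∃ l' : Fin m, tmin π h < l' ∧ π (p0 m l') = p1 m (tmin π h) ∧
      Tmap π h = π * Equiv.swap (p1 m (tmin π h)) (p1 m l') := by
  obtain ⟨l', hl1, hl2⟩ := tmin_partner π h hπ
  have hinv : π⁻¹ (p1 m (tmin π h)) = p0 m l' := by rw [← hl2]; simp
  refine ⟨l', hl1, hl2, ?_⟩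
  unfold Tmap
  congr 1
  · congr 1
    apply Fin.val_injective
    have hv := congrArg Fin.val hinv
    simp only [p0_val] at hv
    simp only [p1_val]
    omega

end SgnPf
namespace SgnPf
open Equiv Equiv.Perm Finset

variable {m : ℕ}

lemma p1_inj {a b : Fin m} (h : p1 m a = p1 m b) : a = b := by
  apply Fin.val_injective
  have := congrArg Fin.val h
  simp only [p1_val] at this
  omega

lemma step_apply_p0 (π : Perm (Fin (2 * m))) (t l' : Fin m) (l : Fin m) :
    (π * Equiv.swap (p1 m t) (p1 m l')) (p0 m l) = π (p0 m l) := by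
  rw [Perm.mul_apply, Equiv.swap_apply_of_ne_of_ne]
  · intro he; have := congrArg Fin.val he; simp only [p0_val, p1_val] at this; omega
  · intro he; have := congrArg Fin.val he; simp only [p0_val, p1_val] at this; omega

lemma step_apply_p1_other (π : Perm (Fin (2 * m))) (t l' : Fin m) (l : Fin m)
    (h1 : l ≠ t) (h2 : l ≠ l') :
    (π * Equiv.swap (p1 m t) (p1 m l')) (p1 m l) = π (p1 m l) := by
  rw [Perm.mul_apply, Equiv.swap_apply_of_ne_of_ne]
  · exact fun he => h1 (p1_inj he)
  · exact fun he => h2 (p1_inj he)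

lemma step_apply_p1_t (π : Perm (Fin (2 * m))) (t l' : Fin m) :
    (π * Equiv.swap (p1 m t) (p1 m l')) (p1 m t) = π (p1 m l') := by
  rw [Perm.mul_apply, Equiv.swap_apply_left]

lemma step_apply_p1_l' (π : Perm (Fin (2 * m))) (t l' : Fin m) :
    (π * Equiv.swap (p1 m t) (p1 m l')) (p1 m l') = π (p1 m t) := by
  rw [Perm.mul_apply, Equiv.swap_apply_right]

lemma Tmap_mem (π : Perm (Fin (2 * m))) (h : (Fset π).Nonempty) (hπ : IsPfPerm π) :
    IsPfPerm (Tmap π h) := by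
  obtain ⟨l', hl1, hl2, hT⟩ := Tmap_eq π h hπ
  have ht0 := tmin_p0 π h hπ
  have htb := tmin_p1 π h hπ
  have hπ' := hπ
  rw [isPfPerm_iff] at hπ'
  rw [isPfPerm_iff, hT]
  set t := tmin π h
  constructor
  · intro l
    rw [step_apply_p0]
    by_cases h1 : l = t
    · subst h1
      rw [step_apply_p1_t, ht0]
      have h2 := hπ'.1 l'
      rw [hl2] at h2
      exact lt_trans (p0_lt_p1 _) h2
    by_cases h2 : l = l'
    · subst h2
      rw [step_apply_p1_l', hl2, Fin.lt_def]
      simp only [p1_val]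
      omega
    · rw [step_apply_p1_other π t l' l h1 h2]
      exact hπ'.1 l
  · intro l l'' hll
    rw [step_apply_p0, step_apply_p0]
    exact hπ'.2 l l'' hll

lemma Tmap_apply_tslot (π : Perm (Fin (2 * m))) (h : (Fset π).Nonempty)
    (hπ : IsPfPerm π) :
    Tmap π h (p1 m (tmin π h)) ≠ π (p1 m (tmin π h)) ∧
      Tmap π h (p1 m (tmin π h)) ≠ p1 m (tmin π h) := by
  obtain ⟨l', hl1, hl2, hT⟩ := Tmap_eq π h hπ
  rw [hT, step_apply_p1_t]
  have hπ' := hπ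
  rw [isPfPerm_iff] at hπ'
  have hd := hπ'.1 l'
  rw [hl2] at hd
  constructor
  · intro he
    have h2 := p1_inj (π.injective he)
    exact absurd h2.symm (ne_of_lt hl1)
  · exact (ne_of_lt hd).symm

lemma Tmap_sign (π : Perm (Fin (2 * m))) (h : (Fset π).Nonempty) (hπ : IsPfPerm π) :
    Perm.sign (Tmap π h) = - Perm.sign π := by
  obtain ⟨l', hl1, hl2, hT⟩ := Tmap_eq π h hπ
  rw [hT, Perm.sign_mul, Perm.sign_swap (fun he => absurd (p1_inj he) (ne_of_lt hl1))]
  exact mul_neg_one _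

lemma Tmap_invol (π : Perm (Fin (2 * m))) (h : (Fset π).Nonempty) (hπ : IsPfPerm π)
    (h2 : (Fset (Tmap π h)).Nonempty) : Tmap (Tmap π h) h2 = π := by
  obtain ⟨l', hl1, hl2, hT⟩ := Tmap_eq π h hπ
  have ht0 := tmin_p0 π h hπ
  set t := tmin π h with htdef
  set π' := Tmap π h with hπ'def
  have htmem : t ∈ Fset π' := by
    rw [Fset, Finset.mem_filter]
    exact ⟨Finset.mem_univ _, Or.inr (Tmap_apply_tslot π h hπ).2⟩
  have hlow : ∀ l ∈ Fset π', t ≤ l := by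
    intro l hl
    by_contra hc
    push_neg at hc
    rw [Fset, Finset.mem_filter] at hl
    have hcv : l.val < t.val := Fin.lt_def.mp hc
    rcases hl.2 with hbad | hbad
    · apply hbad
      rw [hT, step_apply_p0]
      exact tmin_fix π h _ (by simp only [p0_val]; omega)
    · apply hbad
      rw [hT, step_apply_p1_other π t l' l (ne_of_lt hc) (ne_of_lt (lt_trans hc hl1))]
      exact tmin_fix π h _ (by simp only [p1_val]; omega)
  have ht' : tmin π' h2 = t :=
    le_antisymm (Finset.min'_le _ _ htmem) (Finset.le_min' _ _ _ hlow)
  obtain ⟨l'', hm1, hm2, hT2⟩ := Tmap_eq π' h2 (Tmap_mem π h hπ)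
  have hl'' : l'' = l' := by
    rw [ht'] at hm2
    have : π' (p0 m l') = p1 m t := by rw [hT, step_apply_p0, hl2]
    have h3 := π'.injective (hm2.trans this.symm)
    apply Fin.val_injective
    have := congrArg Fin.val h3
    simp only [p0_val] at this
    omega
  rw [hT2, ht', hl'', hT, mul_assoc, Equiv.swap_mul_self, mul_one]

lemma one_mem_PiSet : (1 : Perm (Fin (2 * m))) ∈ PiSet m := by
  rw [PiSet, Finset.mem_filter]
  refine ⟨Finset.mem_univ _, ?_⟩
  rw [isPfPerm_iff]
  constructor
  · intro l
    simp only [Perm.one_apply]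
    exact p0_lt_p1 l
  · intro l l2 hl
    simp only [Perm.one_apply]
    rw [Fin.lt_def]
    simp only [p0_val]
    have := Fin.lt_def.mp hl
    omega

lemma mem_PiSet_isPf {π : Perm (Fin (2 * m))} (h : π ∈ PiSet m) : IsPfPerm π := by
  rw [PiSet, Finset.mem_filter] at h
  exact h.2

lemma sum_sign_PiSet : ∑ π ∈ PiSet m, ((Perm.sign π : ℤˣ) : ℤ) = 1 := by
  rw [← Finset.add_sum_erase _ _ (one_mem_PiSet (m := m))]
  have h0 : ∑ π ∈ (PiSet m).erase 1, ((Perm.sign π : ℤˣ) : ℤ) = 0 := by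
    refine Finset.sum_involution
      (fun π hπ => Tmap π (Fset_nonempty π (Finset.mem_erase.mp hπ).1)) ?_ ?_ ?_ ?_
    · intro π hπ
      have hmem := mem_PiSet_isPf (Finset.mem_erase.mp hπ).2
      rw [Tmap_sign π _ hmem]
      push_cast
      ring
    · intro π hπ _
      intro heq
      have hmem := mem_PiSet_isPf (Finset.mem_erase.mp hπ).2
      have heq' : Tmap π (Fset_nonempty π (Finset.mem_erase.mp hπ).1) = π := heq
      have hne := (Tmap_apply_tslot π (Fset_nonempty π (Finset.mem_erase.mp hπ).1) hmem).1
      rw [heq'] at hne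
      exact hne rfl
    · intro π hπ
      have hmem := mem_PiSet_isPf (Finset.mem_erase.mp hπ).2
      show Tmap π (Fset_nonempty π (Finset.mem_erase.mp hπ).1) ∈ (PiSet m).erase 1
      rw [Finset.mem_erase]
      constructor
      · intro he
        have hne := (Tmap_apply_tslot π (Fset_nonempty π (Finset.mem_erase.mp hπ).1) hmem).2
        rw [he] at hne
        exact hne rfl
      · simp only [PiSet, Finset.mem_filter]
        exact ⟨Finset.mem_univ _, Tmap_mem π _ hmem⟩
    · intro π hπ
      exact Tmap_invol π _ (mem_PiSet_isPf (Finset.mem_erase.mp hπ).2) _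
  rw [h0, add_zero, Perm.sign_one]
  rfl

end SgnPf
namespace SgnPf
open Equiv Equiv.Perm Finset

variable {m : ℕ}

lemma Tot_noninj (c : Fin (2 * m) → ℕ) (hc : ¬ Function.Injective c) :
    ∑ σ : Perm (Fin (2 * m)), term c σ = 0 := by
  rw [Function.not_injective_iff] at hc
  obtain ⟨i, j, hij, hne⟩ := hc
  have hswap : ∀ x : Fin (2 * m), c (Equiv.swap i j x) = c x := by
    intro x
    rcases Equiv.swap_apply_def i j x with _
    by_cases h1 : x = i
    · rw [h1, Equiv.swap_apply_left, ← hij]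
    by_cases h2 : x = j
    · rw [h2, Equiv.swap_apply_right, hij]
    · rw [Equiv.swap_apply_of_ne_of_ne h1 h2]
  refine Finset.sum_involution (fun σ _ => Equiv.swap i j * σ) ?_ ?_ ?_ ?_
  · intro σ _
    have h1 : term c (Equiv.swap i j * σ) = - term c σ := by
      unfold term
      rw [Perm.sign_mul, Perm.sign_swap hne]
      have h2 : ∀ l : Fin m,
          sgn2 (c ((Equiv.swap i j * σ) (p0 m l))) (c ((Equiv.swap i j * σ) (p1 m l)))
          = sgn2 (c (σ (p0 m l))) (c (σ (p1 m l))) := by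
        intro l
        rw [Perm.mul_apply, Perm.mul_apply, hswap, hswap]
      rw [Finset.prod_congr rfl (fun l _ => h2 l)]
      push_cast
      ring
    rw [h1]
    ring
  · intro σ _ _ he
    have h2 : Equiv.swap i j = 1 := by
      have h3 := congrArg (fun τ => τ * σ⁻¹) he
      simpa [mul_assoc] using h3
    have h4 := congrArg (fun e : Perm (Fin (2 * m)) => e i) h2
    simp only [Equiv.swap_apply_left, Perm.one_apply] at h4
    exact hne h4.symm
  · intro σ _
    exact Finset.mem_univ _
  · intro σ _
    show Equiv.swap i j * (Equiv.swap i j * σ) = σ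
    rw [← mul_assoc, Equiv.swap_mul_self, one_mul]

lemma exists_rank (n : ℕ) (c : Fin n → ℕ) (hc : Function.Injective c) :
    ∃ ρ : Perm (Fin n), ∀ i j : Fin n, sgn2 (c i) (c j) = sgn2 ((ρ i : ℕ)) ((ρ j : ℕ)) := by
  refine ⟨(Tuple.sort c)⁻¹, ?_⟩
  have hg : StrictMono (c ∘ (Tuple.sort c : Perm (Fin n))) :=
    (Tuple.monotone_sort c).strictMono_of_injective (hc.comp (Tuple.sort c).injective)
  intro i j
  have hci : c i = (c ∘ (Tuple.sort c : Perm (Fin n))) ((Tuple.sort c)⁻¹ i) := by simp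
  have hcj : c j = (c ∘ (Tuple.sort c : Perm (Fin n))) ((Tuple.sort c)⁻¹ j) := by simp
  rcases lt_trichotomy ((Tuple.sort c)⁻¹ i) ((Tuple.sort c)⁻¹ j) with h | h | h
  · rw [sgn2_of_lt (by rw [hci, hcj]; exact hg h), sgn2_of_lt (Fin.lt_def.mp h)]
  · rw [sgn2_of_eq (by rw [hci, hcj, h]), sgn2_of_eq (by rw [h])]
  · rw [sgn2_of_gt (by rw [hci, hcj]; exact hg h), sgn2_of_gt (Fin.lt_def.mp h)]

lemma Tot_val : (∑ σ : Perm (Fin (2 * m)), term Fin.val σ)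
    = (2 ^ m * Nat.factorial m : ℤ) := by
  rw [master]
  have h1 : ∀ π ∈ PiSet m, term Fin.val π = ((Perm.sign π : ℤˣ) : ℤ) := by
    intro π hπ
    unfold term
    have h2 : ∀ l : Fin m, sgn2 (Fin.val (π (p0 m l))) (Fin.val (π (p1 m l))) = 1 :=
      fun l => sgn2_of_lt (Fin.lt_def.mp (((isPfPerm_iff π).mp (mem_PiSet_isPf hπ)).1 l))
    rw [Finset.prod_congr rfl (fun l _ => h2 l), Finset.prod_const_one, mul_one]
  rw [Finset.sum_congr rfl h1, sum_sign_PiSet, mul_one]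

lemma sum_term_inj (c : Fin (2 * m) → ℕ) (hc : Function.Injective c) :
    ∑ π ∈ PiSet m, term c π = sgnTuple c := by
  obtain ⟨ρ, hρ⟩ := exists_rank (2 * m) c hc
  have hsq : ((Perm.sign ρ : ℤˣ) : ℤ) * ((Perm.sign ρ : ℤˣ) : ℤ) = 1 := by
    rw [← Units.val_mul, ← sq, Int.units_sq]
    rfl
  have hL : sgnTuple c = ((Perm.sign ρ : ℤˣ) : ℤ) := by
    rw [sgnTuple_eq_prod, ← sgnTuple_perm ρ, sgnTuple_eq_prod]
    exact Finset.prod_congr rfl (fun p _ => hρ p.1 p.2)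
  have hpoint : ∀ σ : Perm (Fin (2 * m)),
      term c σ = ((Perm.sign ρ : ℤˣ) : ℤ) * term Fin.val (ρ * σ) := by
    intro σ
    unfold term
    have h2 : ∀ l : Fin m,
        sgn2 (c (σ (p0 m l))) (c (σ (p1 m l)))
        = sgn2 (Fin.val ((ρ * σ) (p0 m l))) (Fin.val ((ρ * σ) (p1 m l))) := by
      intro l
      rw [Perm.mul_apply, Perm.mul_apply]
      exact hρ _ _
    rw [Finset.prod_congr rfl (fun l _ => h2 l), Perm.sign_mul]
    have hc2 : ((Perm.sign ρ * Perm.sign σ : ℤˣ) : ℤ)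
        = ((Perm.sign ρ : ℤˣ) : ℤ) * ((Perm.sign σ : ℤˣ) : ℤ) := by push_cast; ring
    rw [hc2]
    set P := ∏ l : Fin m, sgn2 (Fin.val ((ρ * σ) (p0 m l))) (Fin.val ((ρ * σ) (p1 m l))) with hP
    have h4 : ((Perm.sign ρ : ℤˣ) : ℤ) * (((Perm.sign ρ : ℤˣ) : ℤ) * ((Perm.sign σ : ℤˣ) : ℤ) * P)
        = (((Perm.sign ρ : ℤˣ) : ℤ) * ((Perm.sign ρ : ℤˣ) : ℤ)) * (((Perm.sign σ : ℤˣ) : ℤ) * P) := by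
      ring
    rw [h4, hsq, one_mul]
  have hTot : (∑ σ : Perm (Fin (2 * m)), term c σ)
      = ((Perm.sign ρ : ℤˣ) : ℤ) * (2 ^ m * Nat.factorial m : ℤ) := by
    rw [Finset.sum_congr rfl (fun σ _ => hpoint σ), ← Finset.mul_sum]
    congr 1
    rw [← Tot_val]
    exact Equiv.sum_comp (Equiv.mulLeft ρ) (term Fin.val)
  have h2 := master c
  rw [hTot] at h2
  have hpos : (2 ^ m * Nat.factorial m : ℤ) ≠ 0 := by positivity
  have h3 : (2 ^ m * Nat.factorial m : ℤ) * ∑ π ∈ PiSet m, term c π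
      = (2 ^ m * Nat.factorial m : ℤ) * ((Perm.sign ρ : ℤˣ) : ℤ) := by
    rw [← h2]; ring
  rw [hL, mul_left_cancel₀ hpos h3]

end SgnPf

/-- for a tuple `(c₁,…,c_{2m})` of naturals,
`sgn(c₁,…,c_{2m}) = ∑_{π ∈ Π_{2m}} sgn(π(1),…,π(2m)) ∏_{l=1}^m sgn(c_{π(2l-1)}, c_{π(2l)})`. -/
theorem sgnTuple_eq_sum_pfPerm (m : ℕ) (c : Fin (2 * m) → ℕ) :
    sgnTuple c =
      ∑ π ∈ Finset.univ.filter (fun π : Equiv.Perm (Fin (2 * m)) => IsPfPerm π),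
        sgnTuple (fun i => ((π i : ℕ))) *
          ∏ l : Fin m,
            sgn2 (c (π ⟨2 * l.val, by omega⟩)) (c (π ⟨2 * l.val + 1, by omega⟩)) := by
  have hshape : ∑ π ∈ SgnPf.PiSet m,
        (sgnTuple (fun i => ((π i : ℕ))) *
          ∏ l : Fin m, sgn2 (c (π (SgnPf.p0 m l))) (c (π (SgnPf.p1 m l))))
      = ∑ π ∈ SgnPf.PiSet m, SgnPf.term c π := by
    apply Finset.sum_congr rfl
    intro π _
    rw [SgnPf.sgnTuple_perm π]
    rfl
  show sgnTuple c = ∑ π ∈ SgnPf.PiSet m,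
        (sgnTuple (fun i => ((π i : ℕ))) *
          ∏ l : Fin m, sgn2 (c (π (SgnPf.p0 m l))) (c (π (SgnPf.p1 m l))))
  rw [hshape]
  by_cases hc : Function.Injective c
  · exact (SgnPf.sum_term_inj c hc).symm
  · rw [sgnTuple, if_neg hc]
    have h2 := SgnPf.master c
    rw [SgnPf.Tot_noninj c hc] at h2
    have hpos : (2 ^ m * Nat.factorial m : ℤ) ≠ 0 := by positivity
    exact ((mul_eq_zero.mp h2.symm).resolve_left hpos).symm
end

section
/- Let F be a field, n ≥ k ≥ 1 integers, and X = (x_{i,j}) an n × k matrix over F. Then det_{n,k}(X) = Σ_{σ} sgn_{n,k}(σ) · x_{σ(1),1} · x_{σ(2),2} · ⋯ · x_{σ(k),k}, where the sum runs over all injections σ from {1,…,k} to {1,…,n}. -/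
open Matrix Finset

section AuxCullis

open Equiv

lemma mySignAux_eq_sign {k : ℕ} (τ : Equiv.Perm (Fin k)) :
    Equiv.Perm.signAux τ = Equiv.Perm.sign τ := by
  refine Equiv.Perm.swap_induction_on τ (by simp [Equiv.Perm.signAux_one]) ?_
  intro f x y hxy ih
  rw [Equiv.Perm.signAux_mul, Equiv.Perm.sign_mul, ih, Equiv.Perm.signAux_swap hxy,
    Equiv.Perm.sign_swap hxy]

lemma mySign_eq_pow_inversions {k : ℕ} (τ : Equiv.Perm (Fin k)) :
    ((Equiv.Perm.sign τ : ℤ)) =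
      (-1) ^ (Finset.univ.filter
        (fun p : Fin k × Fin k => p.1 < p.2 ∧ τ p.2 < τ p.1)).card := by
  rw [← mySignAux_eq_sign]
  unfold Equiv.Perm.signAux
  rw [Finset.prod_ite, Finset.prod_const, Finset.prod_const, one_pow, mul_one]
  have hcard : (Finset.filter (fun x => τ x.1 ≤ τ x.2) (Equiv.Perm.finPairsLT k)).card =
      (Finset.univ.filter (fun p : Fin k × Fin k => p.1 < p.2 ∧ τ p.2 < τ p.1)).card := by
    refine Finset.card_bij (fun x _ => (x.2, x.1)) ?_ ?_ ?_
    · intro a ha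
      rw [Finset.mem_filter, Equiv.Perm.mem_finPairsLT] at ha
      rw [Finset.mem_filter]
      refine ⟨Finset.mem_univ _, ha.1, lt_of_le_of_ne ha.2 ?_⟩
      exact fun h => ne_of_lt ha.1 (τ.injective h).symm
    · intro a₁ ha₁ a₂ ha₂ h
      simp only [Prod.mk.injEq] at h
      exact Sigma.ext h.2 (heq_of_eq h.1)
    · intro b hb
      rw [Finset.mem_filter] at hb
      refine ⟨⟨b.2, b.1⟩, ?_, rfl⟩
      rw [Finset.mem_filter, Equiv.Perm.mem_finPairsLT]
      exact ⟨hb.2.1, le_of_lt hb.2.2⟩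
  rw [hcard]
  push_cast
  rfl

lemma cullis_term_eq {F : Type*} [Field F] {n k : ℕ} (X : Matrix (Fin n) (Fin k) F)
    (c : Fin k → Fin n) (hc : ∀ i j : Fin k, i < j → c i < c j) (τ : Equiv.Perm (Fin k)) :
    (-1 : F) ^ (∑ j ∈ Finset.range k, (j + 1)) *
      ((-1 : F) ^ (∑ i : Fin k, ((c i : ℕ) + 1)) *
        (((Equiv.Perm.sign τ : ℤ) : F) * ∏ i : Fin k, X (c (τ i)) i)) =
    ((-1 : F) ^ (∑ α : Fin k, ((((c (τ α) : ℕ) + 1 : ℤ)) - (((α : ℕ) + 1 : ℤ))) : ℤ)) *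
      ((sgnTuple (fun α => ((c (τ α)) : ℕ)) : ℤ) : F) * ∏ α : Fin k, X (c (τ α)) α := by
  have hcmono : StrictMono c := fun i j h => hc i j h
  have hinj : Function.Injective (fun α => ((c (τ α)) : ℕ)) :=
    Fin.val_injective.comp (hcmono.injective.comp τ.injective)
  have hsgn : sgnTuple (fun α => ((c (τ α)) : ℕ)) = ((Equiv.Perm.sign τ : ℤ)) := by
    rw [sgnTuple, if_pos hinj, mySign_eq_pow_inversions]
    congr 1
    congr 1
    apply Finset.filter_congr
    intro p _
    simp only [Fin.lt_def, and_congr_right_iff]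
    intro _
    exact (hcmono.lt_iff_lt (a := τ p.2) (b := τ p.1)).trans Fin.lt_def
  have hz : (∑ α : Fin k, ((((c (τ α) : ℕ) + 1 : ℤ)) - (((α : ℕ) + 1 : ℤ))))
      = ((∑ i : Fin k, ((c i : ℕ) + 1) : ℕ) : ℤ)
        - ((∑ j ∈ Finset.range k, (j + 1) : ℕ) : ℤ) := by
    push_cast
    rw [Finset.sum_sub_distrib]
    congr 1
    · exact Equiv.sum_comp τ (fun i => (((c i : ℕ) : ℤ) + 1))
    · rw [Finset.sum_range (fun j => ((j : ℤ) + 1))]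
  have hpow : ((-1 : F) ^ (∑ α : Fin k, ((((c (τ α) : ℕ) + 1 : ℤ)) - (((α : ℕ) + 1 : ℤ))) : ℤ))
      = (-1 : F) ^ (∑ i : Fin k, ((c i : ℕ) + 1)) *
        (-1 : F) ^ (∑ j ∈ Finset.range k, (j + 1)) := by
    rw [hz, zpow_sub₀ (by norm_num : (-1 : F) ≠ 0), zpow_natCast, zpow_natCast]
    rw [div_eq_mul_inv, ← inv_pow, inv_neg_one]
  rw [hpow, hsgn]
  ring

end AuxCullis

/-- for `n ≥ k ≥ 1` and an `n × k` matrix `X` over a field `F`,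
`det_{n,k}(X) = ∑_σ sgn_{n,k}(σ) x_{σ(1),1} ⋯ x_{σ(k),k}`, the sum over all injections
`σ : {1,…,k} → {1,…,n}`, where
`sgn_{n,k}(σ) = (-1)^{∑_α (σ(α) - α)} ⬝ sgn(σ(1),…,σ(k))`. -/
theorem cullisDet_eq_sum_injections {F : Type*} [Field F] (n k : ℕ) (hk : 1 ≤ k)
    (hn : k ≤ n) (X : Matrix (Fin n) (Fin k) F) :
    cullisDet n k X =
      ∑ σ ∈ Finset.univ.filter (fun σ : Fin k → Fin n => Function.Injective σ),
        ((-1 : F) ^ (∑ α : Fin k, ((((σ α : ℕ) + 1 : ℤ)) - (((α : ℕ) + 1 : ℤ))) : ℤ)) *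
          ((sgnTuple (fun α => (σ α : ℕ)) : ℤ) : F) *
          ∏ α : Fin k, X (σ α) α := by
  classical
  rw [cullisDet, Finset.mul_sum]
  have step1 : ∀ c ∈ Finset.univ.filter
      (fun c : Fin k → Fin n => ∀ i j : Fin k, i < j → c i < c j),
      (-1 : F) ^ (∑ j ∈ Finset.range k, (j + 1)) *
        ((-1 : F) ^ (∑ i : Fin k, ((c i : ℕ) + 1)) * (X.submatrix c id).det) =
      ∑ τ : Equiv.Perm (Fin k),
        ((-1 : F) ^ (∑ α : Fin k, ((((c (τ α) : ℕ) + 1 : ℤ)) - (((α : ℕ) + 1 : ℤ))) : ℤ)) *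
          ((sgnTuple (fun α => ((c (τ α)) : ℕ)) : ℤ) : F) * ∏ α : Fin k, X (c (τ α)) α := by
    intro c hc
    rw [Finset.mem_filter] at hc
    rw [Matrix.det_apply', Finset.mul_sum, Finset.mul_sum]
    refine Finset.sum_congr rfl fun τ _ => ?_
    exact cullis_term_eq X c hc.2 τ
  rw [Finset.sum_congr rfl step1, ← Finset.sum_product']
  refine Finset.sum_bij (fun p _ => p.1 ∘ p.2) ?_ ?_ ?_ ?_
  · rintro ⟨c, τ⟩ hp
    rw [Finset.mem_product, Finset.mem_filter] at hp
    have hcmono : StrictMono c := fun i j h => hp.1.2 i j h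
    rw [Finset.mem_filter]
    exact ⟨Finset.mem_univ _, hcmono.injective.comp τ.injective⟩
  · rintro ⟨c, τ⟩ hp ⟨c', τ'⟩ hp' h
    rw [Finset.mem_product, Finset.mem_filter] at hp hp'
    have hcmono : StrictMono c := fun i j hij => hp.1.2 i j hij
    have hcmono' : StrictMono c' := fun i j hij => hp'.1.2 i j hij
    have hfun : c ∘ ⇑τ = c' ∘ ⇑τ' := h
    set s : Finset (Fin n) := Finset.univ.image (c ∘ ⇑τ) with hs
    have hcard : s.card = k := by
      rw [hs, Finset.card_image_of_injective _ (hcmono.injective.comp τ.injective),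
        Finset.card_univ, Fintype.card_fin]
    have hmemc : ∀ x, c x ∈ s := by
      intro x
      rw [hs]
      exact Finset.mem_image.2 ⟨τ.symm x, Finset.mem_univ _, by simp⟩
    have hmemc' : ∀ x, c' x ∈ s := by
      intro x
      rw [hs, hfun]
      exact Finset.mem_image.2 ⟨τ'.symm x, Finset.mem_univ _, by simp⟩
    have hcc : c = c' := by
      rw [Finset.orderEmbOfFin_unique hcard hmemc hcmono,
        Finset.orderEmbOfFin_unique hcard hmemc' hcmono']
    subst hcc
    have hττ : τ = τ' := Equiv.ext fun x => hcmono.injective (congrFun hfun x)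
    rw [hττ]
  · intro σ hσ
    rw [Finset.mem_filter] at hσ
    have hσinj := hσ.2
    set s : Finset (Fin n) := Finset.univ.image σ with hs
    have hcard : s.card = k := by
      rw [hs, Finset.card_image_of_injective _ hσinj, Finset.card_univ, Fintype.card_fin]
    set c : Fin k → Fin n := fun i => s.orderEmbOfFin hcard i with hcdef
    have hcmono : StrictMono c := (s.orderEmbOfFin hcard).strictMono
    have hmem : ∀ α, σ α ∈ s := fun α => Finset.mem_image_of_mem σ (Finset.mem_univ α)
    set τ₀ : Fin k → Fin k := fun α => (s.orderIsoOfFin hcard).symm ⟨σ α, hmem α⟩ with hτ₀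
    have hcτ : ∀ α, c (τ₀ α) = σ α := by
      intro α
      have h2 : (((s.orderIsoOfFin hcard) ((s.orderIsoOfFin hcard).symm ⟨σ α, hmem α⟩) : s) : Fin n)
          = σ α := by rw [OrderIso.apply_symm_apply]
      rw [Finset.coe_orderIsoOfFin_apply] at h2
      exact h2
    have hτinj : Function.Injective τ₀ := by
      intro a b hab
      apply hσinj
      rw [← hcτ a, ← hcτ b, hab]
    refine ⟨⟨c, Equiv.ofBijective τ₀ (Finite.injective_iff_bijective.1 hτinj)⟩, ?_, ?_⟩
    · rw [Finset.mem_product, Finset.mem_filter]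
      exact ⟨⟨Finset.mem_univ _, fun i j h => hcmono h⟩, Finset.mem_univ _⟩
    · funext α
      exact hcτ α
  · rintro ⟨c, τ⟩ hp
    rfl
end

section
/- Let F be a field and n > k ≥ 1 integers. Let X be an n × k matrix over F and let X' be the n × (k+1) matrix obtained from X by appending a column of all 1's as the last column. Then det_{n,k+1}(X') = det_{n,k}(X) if n + k is odd, and det_{n,k+1}(X') = 0 if n + k is even. -/
open Matrix Finset

section AuxCullis

/-- The number of elements of `Fin n` with value `< m` is `m`, provided `m ≤ n`. -/
lemma aux_card_filter_lt (n m : ℕ) (h : m ≤ n) :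
    (Finset.univ.filter fun x : Fin n => (x : ℕ) < m).card = m := by
  have he : (Finset.univ.filter fun x : Fin n => (x : ℕ) < m)
      = Finset.map (Fin.castLEEmb h) Finset.univ := by
    ext x
    simp only [Finset.mem_filter, Finset.mem_univ, true_and, Finset.mem_map]
    constructor
    · intro hx
      exact ⟨⟨(x : ℕ), hx⟩, by ext; simp⟩
    · rintro ⟨a, -, rfl⟩
      simpa using a.isLt
  rw [he, Finset.card_map, Finset.card_univ, Fintype.card_fin]

lemma aux_card_filter_lt' {n : ℕ} (e : Fin n) :
    (Finset.univ.filter fun x : Fin n => x < e).card = (e : ℕ) := by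
  have he : (Finset.univ.filter fun x : Fin n => x < e)
      = Finset.univ.filter fun x : Fin n => (x : ℕ) < (e : ℕ) := by
    ext x; simp only [Finset.mem_filter, Fin.lt_def]
  rw [he, aux_card_filter_lt n (e : ℕ) e.isLt.le]

lemma aux_sum_neg_one_pow {F : Type*} [Field F] (m : ℕ) :
    ∑ j ∈ Finset.range m, (-1 : F) ^ j = if Odd m then 1 else 0 := by
  induction m with
  | zero => simp
  | succ m ih =>
    rw [Finset.sum_range_succ, ih]
    rcases Nat.even_or_odd m with h | h
    · have h1 : ¬ Odd m := Nat.not_odd_iff_even.mpr h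
      have h2 : Odd (m + 1) := Even.add_one h
      rw [if_neg h1, if_pos h2, h.neg_one_pow]; ring
    · have h2 : ¬ Odd (m + 1) := by
        simp [Nat.odd_add_one, Nat.not_even_iff_odd.mpr h]
      rw [if_pos h, if_neg h2, h.neg_one_pow]; ring

/-- The key alternating-sum lemma: for a `k`-element subset `t` of `Fin n`,
the alternating sum over the complement is `1` or `0` according to parity. -/
lemma aux_key {F : Type*} [Field F] {n k : ℕ} (t : Finset (Fin n)) (ht : t.card = k) :
    ∑ e ∈ tᶜ, (-1 : F) ^ ((e : ℕ) + (t.filter (fun x => x < e)).card)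
      = if Odd (n + k) then 1 else 0 := by
  have hkn : k ≤ n := by
    have := Finset.card_le_univ t
    simpa [ht] using this
  have hm : tᶜ.card = n - k := by
    rw [Finset.card_compl, ht]; simp
  have hrank : ∀ e : Fin n,
      (t.filter (fun x => x < e)).card + (tᶜ.filter (fun x => x < e)).card = (e : ℕ) := by
    intro e
    have hd : Disjoint (t.filter (fun x => x < e)) (tᶜ.filter (fun x => x < e)) :=
      disjoint_compl_right.mono (Finset.filter_subset _ _) (Finset.filter_subset _ _)
    rw [← Finset.card_union_of_disjoint hd, ← Finset.filter_union, Finset.union_compl]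
    exact aux_card_filter_lt' e
  have hterm : ∀ e ∈ tᶜ, (-1 : F) ^ ((e : ℕ) + (t.filter (fun x => x < e)).card)
      = (-1 : F) ^ (tᶜ.filter (fun x => x < e)).card := by
    intro e _
    have h1 := hrank e
    have h2 : (e : ℕ) + (t.filter (fun x => x < e)).card
        = 2 * (t.filter (fun x => x < e)).card + (tᶜ.filter (fun x => x < e)).card := by omega
    rw [h2, pow_add, pow_mul, neg_one_sq, one_pow, one_mul]
  rw [Finset.sum_congr rfl hterm]
  set f := tᶜ.orderEmbOfFin hm with hf
  have hsum : ∑ e ∈ tᶜ, (-1 : F) ^ (tᶜ.filter (fun x => x < e)).card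
      = ∑ j : Fin (n - k), (-1 : F) ^ (tᶜ.filter (fun x => x < f j)).card := by
    refine (Finset.sum_bij (fun j _ => f j) (fun j _ => Finset.orderEmbOfFin_mem _ _ _)
      (fun j₁ _ j₂ _ h => f.injective h) (fun e he => ?_) (fun j _ => rfl)).symm
    have : e ∈ Set.range (f : Fin (n - k) → Fin n) := by
      rw [hf, Finset.range_orderEmbOfFin]; exact he
    obtain ⟨j, hj⟩ := this
    exact ⟨j, Finset.mem_univ _, hj⟩
  rw [hsum]
  have hcard : ∀ j : Fin (n - k), (tᶜ.filter (fun x => x < f j)).card = (j : ℕ) := by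
    intro j
    have himg : tᶜ.filter (fun x => x < f j)
        = Finset.image (fun a => f a) (Finset.univ.filter fun a : Fin (n - k) => a < j) := by
      ext x
      simp only [Finset.mem_filter, Finset.mem_image, Finset.mem_univ, true_and]
      constructor
      · rintro ⟨hx, hlt⟩
        have : x ∈ Set.range (f : Fin (n - k) → Fin n) := by
          rw [hf, Finset.range_orderEmbOfFin]; exact hx
        obtain ⟨a, rfl⟩ := this
        exact ⟨a, f.lt_iff_lt.mp hlt, rfl⟩
      · rintro ⟨a, ha, rfl⟩
        exact ⟨Finset.orderEmbOfFin_mem _ _ _, f.lt_iff_lt.mpr ha⟩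
    rw [himg, Finset.card_image_of_injective _ f.injective, aux_card_filter_lt' j]
  have : ∑ j : Fin (n - k), (-1 : F) ^ (tᶜ.filter (fun x => x < f j)).card
      = ∑ j : Fin (n - k), (-1 : F) ^ (j : ℕ) := by
    refine Finset.sum_congr rfl fun j _ => ?_
    rw [hcard j]
  rw [this, Fin.sum_univ_eq_sum_range (fun j => (-1 : F) ^ j), aux_sum_neg_one_pow]
  have hpar : Odd (n - k) ↔ Odd (n + k) := by
    rw [Nat.odd_iff, Nat.odd_iff]; omega
  simp [hpar]

lemma aux_image_insert {n m : ℕ} (c : Fin (m + 1) → Fin n) (i : Fin (m + 1)) :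
    Finset.image c Finset.univ
      = insert (c i) (Finset.image (c ∘ i.succAbove) Finset.univ) := by
  ext x
  simp only [Finset.mem_image, Finset.mem_univ, true_and, Finset.mem_insert,
    Function.comp_apply]
  constructor
  · rintro ⟨j, rfl⟩
    rcases eq_or_ne j i with rfl | hne
    · exact Or.inl rfl
    · obtain ⟨a, ha⟩ := Fin.exists_succAbove_eq hne
      exact Or.inr ⟨a, by rw [ha]⟩
  · rintro (rfl | ⟨a, rfl⟩)
    · exact ⟨i, rfl⟩
    · exact ⟨_, rfl⟩

lemma aux_not_mem {n m : ℕ} {c : Fin (m + 1) → Fin n} (hc : Function.Injective c)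
    (i : Fin (m + 1)) : c i ∉ Finset.image (c ∘ i.succAbove) Finset.univ := by
  simp only [Finset.mem_image, Finset.mem_univ, true_and, Function.comp_apply, not_exists]
  intro a ha
  exact Fin.succAbove_ne i a (hc ha)

lemma aux_ext_of_image {n m : ℕ} {f g : Fin m → Fin n} (hf : StrictMono f) (hg : StrictMono g)
    (h : Finset.image f Finset.univ = Finset.image g Finset.univ) : f = g := by
  have hcard : (Finset.image f Finset.univ).card = m := by
    rw [Finset.card_image_of_injective _ hf.injective, Finset.card_univ, Fintype.card_fin]
  have h1 := Finset.orderEmbOfFin_unique hcard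
    (fun x => Finset.mem_image_of_mem f (Finset.mem_univ x)) hf
  have h2 := Finset.orderEmbOfFin_unique hcard
    (fun x => h ▸ Finset.mem_image_of_mem g (Finset.mem_univ x)) hg
  exact h1.trans h2.symm

lemma aux_pos {n m : ℕ} {c : Fin (m + 1) → Fin n} (hc : StrictMono c) (i : Fin (m + 1)) :
    (Finset.univ.filter fun j : Fin m => c (i.succAbove j) < c i).card = (i : ℕ) := by
  have he : (Finset.univ.filter fun j : Fin m => c (i.succAbove j) < c i)
      = Finset.univ.filter fun j : Fin m => (j : ℕ) < (i : ℕ) := by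
    ext j
    simp only [Finset.mem_filter, Finset.mem_univ, true_and]
    rw [hc.lt_iff_lt, Fin.succAbove_lt_iff_castSucc_lt, Fin.lt_def, Fin.coe_castSucc]
  rw [he, aux_card_filter_lt m (i : ℕ) i.is_le]

lemma aux_shuffle {F : Type*} [Field F] (a p k e : ℕ) (D : F) :
    (-1 : F) ^ (a + (e + 1)) * ((-1 : F) ^ (p + k) * D)
      = ((-1 : F) ^ a * D) * ((-1 : F) ^ (k + 1) * (-1 : F) ^ (e + p)) := by
  have h : a + (e + 1) + (p + k) = a + ((k + 1) + (e + p)) := by omega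
  calc (-1 : F) ^ (a + (e + 1)) * ((-1 : F) ^ (p + k) * D)
      = (-1 : F) ^ (a + (e + 1) + (p + k)) * D := by rw [pow_add (-1 : F) (a + (e + 1))]; ring
    _ = (-1 : F) ^ (a + ((k + 1) + (e + p))) * D := by rw [h]
    _ = ((-1 : F) ^ a * D) * ((-1 : F) ^ (k + 1) * (-1 : F) ^ (e + p)) := by
        rw [pow_add, pow_add]; ring

end AuxCullis

/-- for `n > k ≥ 1` and an `n × k` matrix `X` over a field `F`, with `X'`
the matrix `X` with a column of `1`'s appended,
`det_{n,k+1}(X') = det_{n,k}(X)` if `n + k` is odd, and `det_{n,k+1}(X') = 0` otherwise. -/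
theorem cullisDet_appendOnes {F : Type*} [Field F] (n k : ℕ) (hk : 1 ≤ k) (hn : k < n)
    (X : Matrix (Fin n) (Fin k) F) :
    cullisDet n (k + 1) (appendOnes (K := k + 1) X) =
      if Odd (n + k) then cullisDet n k X else 0 := by
  classical
  -- Laplace expansion along the last column
  have hstep : ∀ c : Fin (k + 1) → Fin n,
      ((appendOnes (K := k + 1) X).submatrix c id).det
        = ∑ i : Fin (k + 1), (-1 : F) ^ ((i : ℕ) + k) *
            (X.submatrix (c ∘ i.succAbove) id).det := by
    intro c
    rw [Matrix.det_succ_column ((appendOnes (K := k + 1) X).submatrix c id) (Fin.last k)]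
    refine Finset.sum_congr rfl fun i _ => ?_
    have h1 : (appendOnes (K := k + 1) X).submatrix c id i (Fin.last k) = 1 := by
      simp [appendOnes, Matrix.submatrix_apply]
    have h2 : ((appendOnes (K := k + 1) X).submatrix c id).submatrix
        i.succAbove (Fin.last k).succAbove = X.submatrix (c ∘ i.succAbove) id := by
      ext a b
      simp [appendOnes, Matrix.submatrix_apply, Fin.succAbove_last]
    rw [h1, h2, mul_one]
    simp [Fin.val_last]
  simp only [cullisDet]
  have hsum1 :
      ∑ c ∈ Finset.univ.filter
          (fun c : Fin (k + 1) → Fin n => ∀ i j : Fin (k + 1), i < j → c i < c j),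
        (-1 : F) ^ (∑ i : Fin (k + 1), ((c i : ℕ) + 1)) *
          ((appendOnes (K := k + 1) X).submatrix c id).det
      = ∑ c ∈ Finset.univ.filter
          (fun c : Fin (k + 1) → Fin n => ∀ i j : Fin (k + 1), i < j → c i < c j),
          ∑ i : Fin (k + 1),
            (-1 : F) ^ (∑ j : Fin (k + 1), ((c j : ℕ) + 1)) *
              ((-1 : F) ^ ((i : ℕ) + k) * (X.submatrix (c ∘ i.succAbove) id).det) := by
    refine Finset.sum_congr rfl fun c _ => ?_
    rw [hstep c, Finset.mul_sum]
  rw [hsum1]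
  have hbij :
      ∑ c ∈ Finset.univ.filter
          (fun c : Fin (k + 1) → Fin n => ∀ i j : Fin (k + 1), i < j → c i < c j),
          ∑ i : Fin (k + 1),
            (-1 : F) ^ (∑ j : Fin (k + 1), ((c j : ℕ) + 1)) *
              ((-1 : F) ^ ((i : ℕ) + k) * (X.submatrix (c ∘ i.succAbove) id).det)
      = ∑ d ∈ Finset.univ.filter
          (fun d : Fin k → Fin n => ∀ i j : Fin k, i < j → d i < d j),
          ∑ e ∈ (Finset.image d Finset.univ)ᶜ,
            (-1 : F) ^ ((∑ j : Fin k, ((d j : ℕ) + 1)) + ((e : ℕ) + 1)) *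
              ((-1 : F) ^ ((Finset.univ.filter fun j : Fin k => d j < e).card + k) *
                (X.submatrix d id).det) := by
    rw [Finset.sum_sigma', Finset.sum_sigma']
    refine Finset.sum_bij
      (fun p _ => (⟨p.1 ∘ p.2.succAbove, p.1 p.2⟩ : Σ _ : Fin k → Fin n, Fin n))
      ?_ ?_ ?_ ?_
    · rintro ⟨c, i⟩ hp
      rw [Finset.mem_sigma] at hp
      have hc : StrictMono c := fun a b hab => (Finset.mem_filter.mp hp.1).2 a b hab
      rw [Finset.mem_sigma]
      exact ⟨Finset.mem_filter.mpr ⟨Finset.mem_univ _,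
        fun a b hab => (hc.comp (Fin.strictMono_succAbove i)) hab⟩,
        Finset.mem_compl.mpr (aux_not_mem hc.injective i)⟩
    · rintro ⟨c, i⟩ h1 ⟨c', i'⟩ h2 heq
      rw [Finset.mem_sigma] at h1 h2
      have hc : StrictMono c := fun a b hab => (Finset.mem_filter.mp h1.1).2 a b hab
      have hc' : StrictMono c' := fun a b hab => (Finset.mem_filter.mp h2.1).2 a b hab
      obtain ⟨e1, e2⟩ := Sigma.mk.inj_iff.mp heq
      have e2' : c i = c' i' := eq_of_heq e2
      have himg : Finset.image c Finset.univ = Finset.image c' Finset.univ := by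
        rw [aux_image_insert c i, aux_image_insert c' i', e1, e2']
      have hcc : c = c' := aux_ext_of_image hc hc' himg
      subst hcc
      have hii : i = i' := hc.injective e2'
      subst hii
      rfl
    · rintro ⟨d, e⟩ hp
      rw [Finset.mem_sigma] at hp
      have hd : StrictMono d := fun a b hab => (Finset.mem_filter.mp hp.1).2 a b hab
      have he : e ∉ Finset.image d Finset.univ := Finset.mem_compl.mp hp.2
      have hcard : (insert e (Finset.image d Finset.univ)).card = k + 1 := by
        rw [Finset.card_insert_of_notMem he,
          Finset.card_image_of_injective _ hd.injective, Finset.card_univ, Fintype.card_fin]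
      set c : Fin (k + 1) → Fin n :=
        fun j => (insert e (Finset.image d Finset.univ)).orderEmbOfFin hcard j with hcdef
      have hc : StrictMono c := ((insert e (Finset.image d Finset.univ)).orderEmbOfFin
        hcard).strictMono
      have hmemc : ∀ j, c j ∈ insert e (Finset.image d Finset.univ) :=
        fun j => Finset.orderEmbOfFin_mem _ _ _
      have himgc : Finset.image c Finset.univ = insert e (Finset.image d Finset.univ) := by
        apply Finset.eq_of_subset_of_card_le
        · intro x hx
          obtain ⟨j, -, rfl⟩ := Finset.mem_image.mp hx
          exact hmemc j
        · rw [hcard, Finset.card_image_of_injective _ hc.injective, Finset.card_univ,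
            Fintype.card_fin]
      have : ∃ i, c i = e := by
        have hmem : e ∈ Finset.image c Finset.univ := himgc ▸ Finset.mem_insert_self _ _
        obtain ⟨i, -, hi⟩ := Finset.mem_image.mp hmem
        exact ⟨i, hi⟩
      obtain ⟨i, hi⟩ := this
      refine ⟨⟨c, i⟩, ?_, ?_⟩
      · rw [Finset.mem_sigma]
        exact ⟨Finset.mem_filter.mpr ⟨Finset.mem_univ _, fun a b hab => hc hab⟩,
          Finset.mem_univ _⟩
      · have h4 : e ∉ Finset.image (c ∘ i.succAbove) Finset.univ := by
          have h5 := aux_not_mem hc.injective i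
          rwa [hi] at h5
        have h3 := aux_image_insert c i
        rw [himgc, hi] at h3
        have himg2 : Finset.image (c ∘ i.succAbove) Finset.univ
            = Finset.image d Finset.univ := by
          calc Finset.image (c ∘ i.succAbove) Finset.univ
              = (insert e (Finset.image (c ∘ i.succAbove) Finset.univ)).erase e :=
                (Finset.erase_insert h4).symm
            _ = (insert e (Finset.image d Finset.univ)).erase e := by rw [← h3]
            _ = Finset.image d Finset.univ := Finset.erase_insert he
        have hcomp : c ∘ i.succAbove = d :=
          aux_ext_of_image (hc.comp (Fin.strictMono_succAbove i)) hd himg2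
        exact Sigma.mk.inj_iff.mpr ⟨hcomp, heq_of_eq hi⟩
    · rintro ⟨c, i⟩ hp
      rw [Finset.mem_sigma] at hp
      have hc : StrictMono c := fun a b hab => (Finset.mem_filter.mp hp.1).2 a b hab
      have hσ : ∑ j : Fin (k + 1), ((c j : ℕ) + 1)
          = (∑ j : Fin k, ((c (i.succAbove j) : ℕ) + 1)) + (((c i : ℕ)) + 1) := by
        rw [Fin.sum_univ_succAbove (fun j => ((c j : ℕ) + 1)) i]
        omega
      have hpos := aux_pos hc i
      simp only [Function.comp_apply]
      rw [hσ, hpos]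
  rw [hbij]
  have hinner : ∀ d ∈ Finset.univ.filter
      (fun d : Fin k → Fin n => ∀ i j : Fin k, i < j → d i < d j),
      ∑ e ∈ (Finset.image d Finset.univ)ᶜ,
        (-1 : F) ^ ((∑ j : Fin k, ((d j : ℕ) + 1)) + ((e : ℕ) + 1)) *
          ((-1 : F) ^ ((Finset.univ.filter fun j : Fin k => d j < e).card + k) *
            (X.submatrix d id).det)
      = ((-1 : F) ^ (∑ j : Fin k, ((d j : ℕ) + 1)) * (X.submatrix d id).det) *
          ((-1 : F) ^ (k + 1) * (if Odd (n + k) then (1 : F) else 0)) := by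
    intro d hdmem
    have hd : StrictMono d := fun a b hab => (Finset.mem_filter.mp hdmem).2 a b hab
    have hcardt : (Finset.image d Finset.univ).card = k := by
      rw [Finset.card_image_of_injective _ hd.injective, Finset.card_univ, Fintype.card_fin]
    have hfilter : ∀ e : Fin n,
        (Finset.univ.filter fun j : Fin k => d j < e).card
          = ((Finset.image d Finset.univ).filter fun x => x < e).card := by
      intro e
      have himg : (Finset.image d Finset.univ).filter (fun x => x < e)
          = Finset.image d (Finset.univ.filter fun j => d j < e) := by
        ext x
        simp only [Finset.mem_filter, Finset.mem_image, Finset.mem_univ, true_and]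
        constructor
        · rintro ⟨⟨j, rfl⟩, hlt⟩
          exact ⟨j, hlt, rfl⟩
        · rintro ⟨j, hlt, rfl⟩
          exact ⟨⟨j, rfl⟩, hlt⟩
      rw [himg, Finset.card_image_of_injective _ hd.injective]
    have hterm : ∀ e ∈ (Finset.image d Finset.univ)ᶜ,
        (-1 : F) ^ ((∑ j : Fin k, ((d j : ℕ) + 1)) + ((e : ℕ) + 1)) *
          ((-1 : F) ^ ((Finset.univ.filter fun j : Fin k => d j < e).card + k) *
            (X.submatrix d id).det)
        = ((-1 : F) ^ (∑ j : Fin k, ((d j : ℕ) + 1)) * (X.submatrix d id).det) *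
            ((-1 : F) ^ (k + 1) *
              (-1 : F) ^ ((e : ℕ) +
                ((Finset.image d Finset.univ).filter fun x => x < e).card)) := by
      intro e _
      rw [hfilter e]
      exact aux_shuffle _ _ _ _ _
    rw [Finset.sum_congr rfl hterm, ← Finset.mul_sum, ← Finset.mul_sum,
      aux_key (Finset.image d Finset.univ) hcardt]
  rw [Finset.sum_congr rfl hinner, ← Finset.sum_mul]
  set T := ∑ d ∈ Finset.univ.filter
      (fun d : Fin k → Fin n => ∀ i j : Fin k, i < j → d i < d j),
    (-1 : F) ^ (∑ j : Fin k, ((d j : ℕ) + 1)) * (X.submatrix d id).det with hT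
  by_cases hodd : Odd (n + k)
  · rw [if_pos hodd, if_pos hodd, mul_one, Finset.sum_range_succ, pow_add]
    have h2 : (-1 : F) ^ (k + 1) * (-1 : F) ^ (k + 1) = 1 := by
      rw [← pow_add]
      exact Even.neg_one_pow ⟨k + 1, rfl⟩
    generalize (-1 : F) ^ (∑ j ∈ Finset.range k, (j + 1)) = P
    linear_combination P * T * h2
  · rw [if_neg hodd, if_neg hodd]
    simp
end

section
/- Let F be a field and n ≥ k ≥ 1 integers. Let X be an n × k matrix over F and let Y be the (n+1) × k matrix obtained from X by appending a row of all 0's as the last row. Then det_{n+1,k}(Y) = det_{n,k}(X). -/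
open Matrix Finset

/-- for `n ≥ k ≥ 1` and an `n × k` matrix `X` over a field `F`, appending a
row of `0`'s does not change the Cullis determinant: `det_{n+1,k}(Y) = det_{n,k}(X)`. -/
theorem cullisDet_append_zero_row {F : Type*} [Field F] (n k : ℕ) (hk : 1 ≤ k)
    (hn : k ≤ n) (X : Matrix (Fin n) (Fin k) F) :
    cullisDet (n + 1) k
      (Matrix.of fun i j => if h : (i : ℕ) < n then X ⟨(i : ℕ), h⟩ j else 0) =
      cullisDet n k X := by
  unfold cullisDet
  congr 1
  set Y : Matrix (Fin (n+1)) (Fin k) F :=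
    Matrix.of fun i j => if h : (i : ℕ) < n then X ⟨(i : ℕ), h⟩ j else 0 with hY
  have h0 : ∑ c ∈ Finset.univ.filter
        (fun c : Fin k → Fin (n+1) => ∀ i j : Fin k, i < j → c i < c j),
      (-1 : F) ^ (∑ i : Fin k, ((c i : ℕ) + 1)) * (Y.submatrix c id).det
      = ∑ c ∈ (Finset.univ.filter
        (fun c : Fin k → Fin (n+1) => ∀ i j : Fin k, i < j → c i < c j)).filter
        (fun c => ∀ i : Fin k, c i ≠ Fin.last n),
      (-1 : F) ^ (∑ i : Fin k, ((c i : ℕ) + 1)) * (Y.submatrix c id).det := by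
    refine (Finset.sum_filter_of_ne ?_).symm
    intro c _ hne i hlast
    apply hne
    rw [Matrix.det_eq_zero_of_row_eq_zero i, mul_zero]
    intro j
    have : ¬ ((c i : ℕ) < n) := by rw [hlast]; simp [Fin.last]
    simp only [Matrix.submatrix_apply, id_eq, hY, Matrix.of_apply, dif_neg this]
  rw [h0]
  have himg : (Finset.univ.filter
        (fun c : Fin k → Fin (n+1) => ∀ i j : Fin k, i < j → c i < c j)).filter
        (fun c => ∀ i : Fin k, c i ≠ Fin.last n)
      = (Finset.univ.filter
        (fun c : Fin k → Fin n => ∀ i j : Fin k, i < j → c i < c j)).image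
        (fun c i => (c i).castSucc) := by
    ext c
    simp only [Finset.mem_filter, Finset.mem_image, Finset.mem_univ, true_and]
    constructor
    · rintro ⟨hinc, hne⟩
      have hlt : ∀ i : Fin k, (c i : ℕ) < n := by
        intro i
        have h1 := hne i
        have h2 := (c i).isLt
        rw [Fin.ne_iff_vne] at h1
        simp only [Fin.val_last] at h1
        omega
      refine ⟨fun i => ⟨(c i : ℕ), hlt i⟩, ?_, ?_⟩
      · intro i j hij
        exact hinc i j hij
      · funext i
        exact Fin.ext rfl
    · rintro ⟨d, hd, rfl⟩
      constructor
      · intro i j hij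
        exact Fin.castSucc_lt_castSucc_iff.mpr (hd i j hij)
      · intro i
        rw [Fin.ne_iff_vne]
        simp only [Fin.coe_castSucc, Fin.val_last]
        exact (d i).isLt.ne
  rw [himg]
  rw [Finset.sum_image (by
    intro a _ b _ hab
    funext i
    have := congrFun hab i
    exact Fin.castSucc_injective n this)]
  refine Finset.sum_congr rfl ?_
  intro c hc
  have hmat : Y.submatrix (fun i => (c i).castSucc) id = X.submatrix c id := by
    ext i j
    simp only [Matrix.submatrix_apply, id_eq, hY, Matrix.of_apply]
    rw [dif_pos (by simpa using (c i).isLt)]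
    rfl
  rw [hmat]
  rfl
end

section
/- Let F be a field and n ≥ k ≥ 1 integers. If an n × k matrix X over F has two identical columns, or one of its columns is a linear combination of the other columns, then det_{n,k}(X) = 0. -/
open Matrix Finset

lemma cullisDet_aux {F : Type*} [Field F] (n k : ℕ) (X : Matrix (Fin n) (Fin k) F)
    (v : Fin k → F) (hv : v ≠ 0) (hz : ∀ i, ∑ j, X i j * v j = 0) :
    cullisDet n k X = 0 := by
  unfold cullisDet
  have hterm : ∀ c ∈ Finset.univ.filter
      (fun c : Fin k → Fin n => ∀ i j : Fin k, i < j → c i < c j),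
      (-1 : F) ^ (∑ i : Fin k, ((c i : ℕ) + 1)) * (X.submatrix c id).det = 0 := by
    intro c _
    have hdet : (X.submatrix c id).det = 0 := by
      rw [← Matrix.exists_mulVec_eq_zero_iff]
      refine ⟨v, hv, ?_⟩
      funext i
      simp only [Matrix.mulVec, Matrix.submatrix_apply, id, Pi.zero_apply, dotProduct]
      exact hz (c i)
    rw [hdet, mul_zero]
  rw [Finset.sum_eq_zero hterm, mul_zero]

/-- if an `n × k` matrix `X` (`n ≥ k ≥ 1`) has two identical columns, or one
of its columns is a linear combination of the other columns, then `det_{n,k}(X) = 0`. -/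
theorem cullisDet_eq_zero {F : Type*} [Field F] (n k : ℕ) (hk : 1 ≤ k) (hn : k ≤ n)
    (X : Matrix (Fin n) (Fin k) F)
    (h : (∃ j₁ j₂ : Fin k, j₁ ≠ j₂ ∧ ∀ i, X i j₁ = X i j₂) ∨
      (∃ j : Fin k, ∃ coef : Fin k → F,
        ∀ i, X i j = ∑ j' ∈ Finset.univ.erase j, coef j' * X i j')) :
    cullisDet n k X = 0 := by
  rcases h with ⟨j₁, j₂, hne, heq⟩ | ⟨j, coef, heq⟩
  · refine cullisDet_aux n k X
      (fun j' => (if j' = j₁ then 1 else 0) - (if j' = j₂ then 1 else 0)) ?_ ?_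
    · intro h0
      have := congrFun h0 j₁
      simp [hne] at this
    · intro i
      simp only [mul_sub, mul_one, mul_zero, Finset.sum_sub_distrib, mul_ite,
        Finset.sum_ite_eq', Finset.mem_univ, if_true]
      rw [heq i, sub_self]
  · refine cullisDet_aux n k X (fun j' => if j' = j then -1 else coef j') ?_ ?_
    · intro h0
      have := congrFun h0 j
      simp at this
    · intro i
      have h1 : ∑ x ∈ Finset.univ.erase j, X i x * (if x = j then -1 else coef x)
          = ∑ x ∈ Finset.univ.erase j, coef x * X i x :=
        Finset.sum_congr rfl (fun x hx => by
          rw [if_neg (Finset.ne_of_mem_erase hx)]; ring)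
      rw [← Finset.add_sum_erase _ _ (Finset.mem_univ j), h1]
      simp only [eq_self_iff_true, if_true]
      rw [← heq i]
      ring
end

section
/- Let F be a field and n ≥ k ≥ 1 integers. If Y is obtained from an n × k matrix X over F by interchanging two distinct columns, then det_{n,k}(Y) = -det_{n,k}(X). -/
open Matrix Finset

/-- interchanging two distinct columns of an `n × k` matrix (`n ≥ k ≥ 1`)
changes the sign of the Cullis determinant. -/
theorem cullisDet_swap_columns {F : Type*} [Field F] (n k : ℕ) (hk : 1 ≤ k) (hn : k ≤ n)
    (X : Matrix (Fin n) (Fin k) F) (j₁ j₂ : Fin k) (hj : j₁ ≠ j₂) :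
    cullisDet n k (X.submatrix id (Equiv.swap j₁ j₂)) = - cullisDet n k X := by
  have key : ∀ c : Fin k → Fin n,
      ((X.submatrix id (Equiv.swap j₁ j₂)).submatrix c id).det = - (X.submatrix c id).det := by
    intro c
    have h1 : (X.submatrix id (Equiv.swap j₁ j₂)).submatrix c id
        = (X.submatrix c id).submatrix id (Equiv.swap j₁ j₂) := by
      simp [Matrix.submatrix_submatrix]
    rw [h1, Matrix.det_permute' (Equiv.swap j₁ j₂)]
    simp [Equiv.Perm.sign_swap hj]
  unfold cullisDet
  rw [← mul_neg, ← Finset.sum_neg_distrib]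
  congr 1
  apply Finset.sum_congr rfl
  intro c _
  rw [key c, mul_neg]
end

section
/- Let F be a field and n ≥ k ≥ 1 integers. If Y is obtained from an n × k matrix X over F by adding to one column a linear combination of the other columns, then det_{n,k}(Y) = det_{n,k}(X). -/
open Matrix Finset

lemma sq_det' {F : Type*} [Field F] {k : ℕ} (M : Matrix (Fin k) (Fin k) F)
    (j : Fin k) (coef : Fin k → F) :
    det (M.updateCol j (fun i => M i j + ∑ j' ∈ Finset.univ.erase j, coef j' * M i j')) =
    det M := by
  have := Matrix.det_updateCol_sum M j (fun j' => if j' = j then 1 else coef j')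
  simp only [eq_self_iff_true, if_true, one_smul] at this
  have hf : (fun i => M i j + ∑ j' ∈ Finset.univ.erase j, coef j' * M i j') =
      fun i => ∑ x : Fin k, (if x = j then 1 else coef x) • M i x := by
    funext i
    rw [← Finset.add_sum_erase _ _ (Finset.mem_univ j)]
    simp only [eq_self_iff_true, if_true, one_smul]
    congr 1
    exact Finset.sum_congr rfl fun x hx => by simp [Finset.ne_of_mem_erase hx]
  rw [hf, this]

lemma sub_upd' {F : Type*} [Field F] {n k : ℕ} (X : Matrix (Fin n) (Fin k) F)
    (c : Fin k → Fin n) (j : Fin k) (u : Fin n → F) :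
    (X.updateCol j u).submatrix c id = (X.submatrix c id).updateCol j (u ∘ c) := by
  ext i j'
  simp [Matrix.updateCol_apply, Matrix.submatrix_apply]

/-- adding to a column of an `n × k` matrix (`n ≥ k ≥ 1`) a linear
combination of the other columns does not change the Cullis determinant. -/
theorem cullisDet_add_linear_combination {F : Type*} [Field F] (n k : ℕ) (hk : 1 ≤ k)
    (hn : k ≤ n) (X : Matrix (Fin n) (Fin k) F) (j : Fin k) (coef : Fin k → F) :
    cullisDet n k
      (X.updateCol j
        (fun i => X i j + ∑ j' ∈ Finset.univ.erase j, coef j' * X i j')) =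
      cullisDet n k X := by
  unfold cullisDet
  congr 1
  refine Finset.sum_congr rfl fun c _ => ?_
  congr 1
  rw [sub_upd']
  exact sq_det' (X.submatrix c id) j coef
end

section
/- Let F be a field, n ≥ k > 1 integers, and X = (x_{i,j}) an n × k matrix over F. Then for any column index 1 ≤ j ≤ k, det_{n,k}(X) = Σ_{i=1}^{n} (-1)^{i+j} · x_{i,j} · det_{n-1,k-1}(X(i | j)), where X(i | j) denotes the (n-1) × (k-1) matrix obtained from X by deleting the i-th row and the j-th column. -/
open Matrix Finset

section CullisAux

lemma mySuccAboveVal {p : ℕ} (i : Fin (p + 1)) (x : Fin p) :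
    (i.succAbove x : ℕ) = if (x : ℕ) < (i : ℕ) then (x : ℕ) else (x : ℕ) + 1 := by
  rw [Fin.succAbove, apply_ite (Fin.val)]
  simp [Fin.lt_def]

lemma delOne_eq_succAbove {p : ℕ} (i : Fin (p + 1)) :
    (delOne (M := p) i) = Fin.succAbove i := by
  have hcard : ({i}ᶜ : Finset (Fin (p + 1))).card = p := by
    rw [Finset.card_compl]; simp
  have h1 : (Fin.succAbove i : Fin p → Fin (p + 1)) =
      ({i}ᶜ : Finset (Fin (p + 1))).orderEmbOfFin hcard :=
    Finset.orderEmbOfFin_unique hcard (fun x => by simp [Fin.succAbove_ne])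
      (Fin.strictMono_succAbove i)
  funext l
  have hl : (l : ℕ) < (Finset.sort ({i}ᶜ : Finset (Fin (p + 1))) (· ≤ ·)).length := by
    rw [Finset.length_sort, hcard]; exact l.isLt
  show (Finset.sort ({i}ᶜ : Finset (Fin (p + 1))) (· ≤ ·)).getD (l : ℕ) i = _
  rw [List.getD_eq_getElem _ _ hl]
  have := congrFun h1 l
  rw [this, Finset.orderEmbOfFin_apply]
  rfl

/-- Partial inverse of `Fin.succAbove`. -/
def unembed {p : ℕ} (hp : 0 < p) (i y : Fin (p + 1)) : Fin p :=
  ⟨if (y : ℕ) < (i : ℕ) then (y : ℕ) else (y : ℕ) - 1, by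
    have h1 := y.isLt; have h2 := i.isLt; split <;> omega⟩

lemma unembed_val {p : ℕ} (hp : 0 < p) (i y : Fin (p + 1)) :
    (unembed hp i y : ℕ) = if (y : ℕ) < (i : ℕ) then (y : ℕ) else (y : ℕ) - 1 := rfl

lemma unembed_succAbove {p : ℕ} (hp : 0 < p) (i : Fin (p + 1)) (x : Fin p) :
    unembed hp i (i.succAbove x) = x := by
  apply Fin.ext
  rw [unembed_val, mySuccAboveVal]
  split_ifs <;> omega

lemma succAbove_unembed {p : ℕ} (hp : 0 < p) {i y : Fin (p + 1)} (h : y ≠ i) :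
    i.succAbove (unembed hp i y) = y := by
  have hne : (y : ℕ) ≠ (i : ℕ) := fun hc => h (Fin.ext hc)
  have h1 := y.isLt
  apply Fin.ext
  rw [mySuccAboveVal, unembed_val]
  split_ifs <;> omega

lemma unembed_lt_unembed {p : ℕ} (hp : 0 < p) {i y y' : Fin (p + 1)} (h : y < y')
    (hy : y ≠ i) (hy' : y' ≠ i) : unembed hp i y < unembed hp i y' := by
  have h1 : (y : ℕ) ≠ i := fun hc => hy (Fin.ext hc)
  have h2 : (y' : ℕ) ≠ i := fun hc => hy' (Fin.ext hc)
  have h3 : (y : ℕ) < (y' : ℕ) := h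
  rw [Fin.lt_def, unembed_val, unembed_val]
  split_ifs <;> omega

lemma unembed_lt_pivot_iff {p : ℕ} (hp : 0 < p) {i y : Fin (p + 1)} (hy : y ≠ i) :
    (unembed hp i y : ℕ) < (i : ℕ) ↔ (y : ℕ) < (i : ℕ) := by
  have h1 : (y : ℕ) ≠ i := fun hc => hy (Fin.ext hc)
  rw [unembed_val]
  split_ifs <;> omega

lemma card_filter_val_lt {m a : ℕ} (ha : a ≤ m) :
    ((Finset.univ : Finset (Fin m)).filter (fun l : Fin m => (l : ℕ) < a)).card = a := by
  have key : (Finset.univ : Finset (Fin m)).filter (fun l : Fin m => (l : ℕ) < a) =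
      (Finset.univ : Finset (Fin a)).map (Fin.castLEEmb ha) := by
    ext y
    simp only [Finset.mem_filter, Finset.mem_univ, true_and, Finset.mem_map]
    constructor
    · intro hy
      exact ⟨⟨(y : ℕ), hy⟩, by simp [Fin.castLEEmb, Fin.castLE, Fin.ext_iff]⟩
    · rintro ⟨x, rfl⟩
      simpa [Fin.castLEEmb, Fin.castLE] using x.isLt
  rw [key, Finset.card_map, Finset.card_univ, Fintype.card_fin]

/-- The position at which `i` would be inserted into the increasing tuple `c'`. -/
def rpos {p m : ℕ} (i : Fin (p + 1)) (c' : Fin m → Fin p) : Fin (m + 1) :=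
  ⟨((Finset.univ : Finset (Fin m)).filter (fun l : Fin m => (c' l : ℕ) < (i : ℕ))).card,
    Nat.lt_succ_of_le (le_trans (Finset.card_filter_le _ _) (by simp))⟩

lemma rpos_val {p m : ℕ} (i : Fin (p + 1)) (c' : Fin m → Fin p) :
    (rpos i c' : ℕ) =
      ((Finset.univ : Finset (Fin m)).filter (fun l : Fin m => (c' l : ℕ) < (i : ℕ))).card := rfl

lemma lt_rpos_iff {p m : ℕ} (i : Fin (p + 1)) {c' : Fin m → Fin p} (hc : StrictMono c')
    (l : Fin m) : (l : ℕ) < (rpos i c' : ℕ) ↔ (c' l : ℕ) < (i : ℕ) := by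
  constructor
  · intro h
    by_contra hcon
    push_neg at hcon
    have hsub : (Finset.univ : Finset (Fin m)).filter (fun l' : Fin m => (c' l' : ℕ) < (i : ℕ)) ⊆
        (Finset.univ : Finset (Fin m)).filter (fun l' : Fin m => (l' : ℕ) < (l : ℕ)) := by
      intro s hs
      simp only [Finset.mem_filter, Finset.mem_univ, true_and] at hs ⊢
      by_contra hs2
      push_neg at hs2
      have hle : c' l ≤ c' s := hc.monotone (Fin.le_def.mpr hs2)
      have hle' : (c' l : ℕ) ≤ (c' s : ℕ) := Fin.le_def.mp hle
      omega
    have hcard := Finset.card_le_card hsub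
    rw [card_filter_val_lt (le_of_lt l.isLt)] at hcard
    rw [rpos_val] at h
    omega
  · intro h
    have hsub : (Finset.univ : Finset (Fin m)).filter (fun l' : Fin m => (l' : ℕ) < (l : ℕ) + 1) ⊆
        (Finset.univ : Finset (Fin m)).filter (fun l' : Fin m => (c' l' : ℕ) < (i : ℕ)) := by
      intro s hs
      simp only [Finset.mem_filter, Finset.mem_univ, true_and] at hs ⊢
      have hle : c' s ≤ c' l := hc.monotone (Fin.le_def.mpr (by omega))
      have hle' : (c' s : ℕ) ≤ (c' l : ℕ) := Fin.le_def.mp hle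
      omega
    have hcard := Finset.card_le_card hsub
    rw [card_filter_val_lt (by omega : (l : ℕ) + 1 ≤ m)] at hcard
    rw [rpos_val]
    omega

/-- Insert `i` into the increasing tuple `i.succAbove ∘ c'` at the right position. -/
def merge {p m : ℕ} (i : Fin (p + 1)) (c' : Fin m → Fin p) : Fin (m + 1) → Fin (p + 1) :=
  (rpos i c').insertNth i (fun l => i.succAbove (c' l))

lemma merge_rpos {p m : ℕ} (i : Fin (p + 1)) (c' : Fin m → Fin p) :
    merge i c' (rpos i c') = i :=
  Fin.insertNth_apply_same _ _ _

lemma merge_succAbove {p m : ℕ} (i : Fin (p + 1)) (c' : Fin m → Fin p) (l : Fin m) :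
    merge i c' ((rpos i c').succAbove l) = i.succAbove (c' l) :=
  Fin.insertNth_apply_succAbove _ _ _ _

lemma merge_strictMono {p m : ℕ} {i : Fin (p + 1)} {c' : Fin m → Fin p}
    (hc : StrictMono c') : StrictMono (merge i c') := by
  intro s s' hss
  rcases eq_or_ne s (rpos i c') with rfl | hs
  · obtain ⟨l', hl'⟩ := Fin.exists_succAbove_eq ((ne_of_lt hss).symm)
    rw [← hl'] at hss ⊢
    rw [merge_rpos, merge_succAbove]
    have h1 : (rpos i c' : ℕ) ≤ (l' : ℕ) := by
      have := (Fin.lt_succAbove_iff_le_castSucc _ _).mp hss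
      simpa [Fin.le_def] using this
    have h2 : (i : ℕ) ≤ (c' l' : ℕ) := by
      by_contra hcon
      push_neg at hcon
      have := (lt_rpos_iff i hc l').mpr hcon
      omega
    rw [Fin.lt_succAbove_iff_le_castSucc]
    simpa [Fin.le_def] using h2
  · obtain ⟨l, hl⟩ := Fin.exists_succAbove_eq hs
    rcases eq_or_ne s' (rpos i c') with rfl | hs'
    · rw [← hl] at hss ⊢
      rw [merge_rpos, merge_succAbove]
      have h1 : (l : ℕ) < (rpos i c' : ℕ) := by
        have := (Fin.succAbove_lt_iff_castSucc_lt _ _).mp hss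
        simpa [Fin.lt_def] using this
      have h2 := (lt_rpos_iff i hc l).mp h1
      rw [Fin.succAbove_lt_iff_castSucc_lt]
      simpa [Fin.lt_def] using h2
    · obtain ⟨l', hl'⟩ := Fin.exists_succAbove_eq hs'
      rw [← hl, ← hl'] at hss ⊢
      rw [merge_succAbove, merge_succAbove]
      exact (Fin.strictMono_succAbove i) (hc (Fin.succAbove_lt_succAbove_iff.mp hss))

lemma rpos_extract {p m : ℕ} (hp : 0 < p) {c : Fin (m + 1) → Fin (p + 1)}
    (hc : StrictMono c) (r : Fin (m + 1)) :
    rpos (c r) (fun l => unembed hp (c r) (c (r.succAbove l))) = r := by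
  apply Fin.ext
  rw [rpos_val]
  have hfil : (Finset.univ : Finset (Fin m)).filter
      (fun l : Fin m => ((unembed hp (c r) (c (r.succAbove l)) : ℕ) < ((c r) : ℕ))) =
      (Finset.univ : Finset (Fin m)).filter (fun l : Fin m => (l : ℕ) < (r : ℕ)) := by
    apply Finset.filter_congr
    intro l _
    have hne : c (r.succAbove l) ≠ c r := fun h => Fin.succAbove_ne r l (hc.injective h)
    rw [unembed_lt_pivot_iff hp hne]
    constructor
    · intro h
      have h2 : r.succAbove l < r := hc.lt_iff_lt.mp (Fin.lt_def.mpr h)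
      have h3 := (Fin.succAbove_lt_iff_castSucc_lt _ _).mp h2
      simpa [Fin.lt_def] using h3
    · intro h
      have h2 : r.succAbove l < r :=
        (Fin.succAbove_lt_iff_castSucc_lt _ _).mpr (by simpa [Fin.lt_def] using h)
      exact hc h2
  rw [hfil, card_filter_val_lt (by have := r.isLt; omega : (r : ℕ) ≤ m)]

lemma merge_extract {p m : ℕ} (hp : 0 < p) {c : Fin (m + 1) → Fin (p + 1)}
    (hc : StrictMono c) (r : Fin (m + 1)) :
    merge (c r) (fun l => unembed hp (c r) (c (r.succAbove l))) = c := by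
  have hr := rpos_extract hp hc r
  funext s
  rcases eq_or_ne s r with rfl | hs
  · have h0 := merge_rpos (c s) (fun l => unembed hp (c s) (c (s.succAbove l)))
    rw [hr] at h0
    exact h0
  · obtain ⟨l, hl⟩ := Fin.exists_succAbove_eq hs
    have hne : c (r.succAbove l) ≠ c r := fun h => Fin.succAbove_ne r l (hc.injective h)
    have h0 := merge_succAbove (c r) (fun l => unembed hp (c r) (c (r.succAbove l))) l
    rw [hr] at h0
    rw [← hl, h0]
    exact succAbove_unembed hp hne

lemma sum_merge_val {p m : ℕ} (i : Fin (p + 1)) (c' : Fin m → Fin p) :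
    (∑ s : Fin (m + 1), ((merge i c' s : ℕ) + 1)) + (rpos i c' : ℕ) =
      (m + 1) + (i : ℕ) + (∑ l : Fin m, ((c' l : ℕ) + 1)) := by
  rw [Fin.sum_univ_succAbove (fun s => ((merge i c' s : ℕ) + 1)) (rpos i c')]
  simp only [merge_rpos, merge_succAbove]
  have hterm : ∀ l : Fin m, ((i.succAbove (c' l) : ℕ) + 1) =
      (((c' l : ℕ) + 1) + (if (c' l : ℕ) < (i : ℕ) then 0 else 1)) := by
    intro l
    rw [mySuccAboveVal]
    split_ifs <;> omega
  rw [Finset.sum_congr rfl (fun l _ => hterm l), Finset.sum_add_distrib]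
  have hboole : (∑ l : Fin m, if (c' l : ℕ) < (i : ℕ) then 0 else 1) =
      ((Finset.univ : Finset (Fin m)).filter (fun l : Fin m => ¬ ((c' l : ℕ) < (i : ℕ)))).card := by
    have hswap : ∀ l : Fin m, (if (c' l : ℕ) < (i : ℕ) then (0 : ℕ) else 1) =
        (if ¬ ((c' l : ℕ) < (i : ℕ)) then 1 else 0) := by
      intro l; by_cases h : (c' l : ℕ) < (i : ℕ) <;> simp [h]
    rw [Finset.sum_congr rfl (fun l _ => hswap l), Finset.sum_boole]
    simp
  rw [hboole, rpos_val]
  have hsplit := Finset.card_filter_add_card_filter_not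
    (s := (Finset.univ : Finset (Fin m))) (p := fun l => (c' l : ℕ) < (i : ℕ))
  simp only [Finset.card_univ, Fintype.card_fin] at hsplit
  omega

theorem cullis_main_aux {F : Type*} [Field F] (m p : ℕ) (hm : 0 < m) (hmp : m ≤ p)
    (X : Matrix (Fin (p + 1)) (Fin (m + 1)) F) (j : Fin (m + 1)) :
    cullisDet (p + 1) (m + 1) X =
      ∑ i : Fin (p + 1), (-1 : F) ^ (((i : ℕ) + 1) + ((j : ℕ) + 1)) * X i j *
        cullisDet p m (X.submatrix (delOne i) (delOne j)) := by
  have hp : 0 < p := lt_of_lt_of_le hm hmp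
  simp only [delOne_eq_succAbove]
  have expand : ∀ c : Fin (m + 1) → Fin (p + 1),
      (X.submatrix c id).det =
        ∑ r : Fin (m + 1), (-1 : F) ^ ((r : ℕ) + (j : ℕ)) * X (c r) j *
          (X.submatrix (c ∘ r.succAbove) (Fin.succAbove j)).det := by
    intro c
    rw [Matrix.det_succ_column (X.submatrix c id) j]
    refine Finset.sum_congr rfl fun r _ => ?_
    rw [Matrix.submatrix_submatrix]
    simp [Matrix.submatrix_apply, Function.id_comp]
  simp only [cullisDet]
  simp only [expand]
  simp only [Matrix.submatrix_submatrix, Function.comp_id, Function.id_comp]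
  simp only [Finset.mul_sum]
  rw [← Finset.sum_product', ← Finset.sum_product']
  refine (Finset.sum_nbij'
    (fun w : Fin (p + 1) × (Fin m → Fin p) => ((merge w.1 w.2, rpos w.1 w.2) :
      (Fin (m + 1) → Fin (p + 1)) × Fin (m + 1)))
    (fun q : (Fin (m + 1) → Fin (p + 1)) × Fin (m + 1) =>
      ((q.1 q.2, fun l => unembed hp (q.1 q.2) (q.1 (q.2.succAbove l))) :
        Fin (p + 1) × (Fin m → Fin p)))
    ?_ ?_ ?_ ?_ ?_).symm
  · rintro ⟨i, c'⟩ hw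
    simp only [Finset.mem_product, Finset.mem_filter, Finset.mem_univ, true_and,
      and_true] at hw ⊢
    intro a b hab
    exact merge_strictMono (fun a b hab => hw a b hab) hab
  · rintro ⟨c, r⟩ hq
    simp only [Finset.mem_product, Finset.mem_filter, Finset.mem_univ, true_and,
      and_true] at hq ⊢
    intro a b hab
    have hcm : StrictMono c := fun a b h => hq a b h
    exact unembed_lt_unembed hp (hcm (Fin.succAbove_lt_succAbove_iff.mpr hab))
      (fun h => Fin.succAbove_ne r a (hcm.injective h))
      (fun h => Fin.succAbove_ne r b (hcm.injective h))
  · rintro ⟨i, c'⟩ hw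
    dsimp only
    refine Prod.ext ?_ ?_
    · exact merge_rpos i c'
    · funext l
      show unembed hp (merge i c' (rpos i c')) (merge i c' ((rpos i c').succAbove l)) = c' l
      rw [merge_rpos, merge_succAbove]
      exact unembed_succAbove hp i (c' l)
  · rintro ⟨c, r⟩ hq
    simp only [Finset.mem_product, Finset.mem_filter, Finset.mem_univ, true_and,
      and_true] at hq
    have hcm : StrictMono c := fun a b h => hq a b h
    dsimp only
    exact Prod.ext (merge_extract hp hcm r) (rpos_extract hp hcm r)
  · rintro ⟨i, c'⟩ hw
    dsimp only
    have hcomp : (merge i c') ∘ (rpos i c').succAbove = (Fin.succAbove i) ∘ c' :=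
      funext fun l => merge_succAbove i c' l
    rw [merge_rpos, hcomp]
    have hsum := sum_merge_val i c'
    have hE : (∑ x ∈ Finset.range (m + 1), (x + 1)) =
        (∑ x ∈ Finset.range m, (x + 1)) + (m + 1) := Finset.sum_range_succ _ _
    have hrle : (rpos i c' : ℕ) ≤ m := by have := (rpos i c').isLt; omega
    have key : (-1 : F) ^ ((((i : ℕ) + 1) + ((j : ℕ) + 1)) +
          ((∑ x ∈ Finset.range m, (x + 1)) + (∑ l : Fin m, ((c' l : ℕ) + 1)))) =
        (-1 : F) ^ ((∑ x ∈ Finset.range (m + 1), (x + 1)) +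
          ((∑ s : Fin (m + 1), ((merge i c' s : ℕ) + 1)) +
            (((rpos i c' : ℕ)) + (j : ℕ)))) := by
      rw [neg_one_pow_eq_pow_mod_two, neg_one_pow_eq_pow_mod_two
        (n := (∑ x ∈ Finset.range (m + 1), (x + 1)) +
          ((∑ s : Fin (m + 1), ((merge i c' s : ℕ) + 1)) +
            (((rpos i c' : ℕ)) + (j : ℕ))))]
      congr 1
      omega
    linear_combination
      (X i j * ((X.submatrix ((Fin.succAbove i) ∘ c') (Fin.succAbove j)).det)) * key

end CullisAux

/-- Laplace expansion of the Cullis determinant along the `j`-th column: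
for `n ≥ k > 1`, `det_{n,k}(X) = ∑_{i=1}^n (-1)^{i+j} x_{ij} det_{n-1,k-1}(X(i|j))`,
where `X(i|j)` is obtained from `X` by deleting row `i` and column `j`. -/
theorem cullisDet_laplace_expansion {F : Type*} [Field F] (n k : ℕ) (hk : 1 < k)
    (hn : k ≤ n) (X : Matrix (Fin n) (Fin k) F) (j : Fin k) :
    cullisDet n k X =
      ∑ i : Fin n, (-1 : F) ^ (((i : ℕ) + 1) + ((j : ℕ) + 1)) * X i j *
        cullisDet (n - 1) (k - 1) (X.submatrix (delOne i) (delOne j)) := by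
  obtain ⟨m, rfl⟩ : ∃ m, k = m + 1 := ⟨k - 1, by omega⟩
  obtain ⟨p, rfl⟩ : ∃ p, n = p + 1 := ⟨n - 1, by omega⟩
  exact cullis_main_aux m p (by omega) (by omega) X j
end
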